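/- arXiv:1705.01999 — 3 statements merged into one kernel-verified Lean document; each statement's English description precedes it below -/
import Mathlib

section
/- Let F ∈ ℤ[x₁,…,xₙ] be a quadratic form, M a positive integer with factorization M = M₁M₂ into coprime parts, and q = q₁q₂ with gcd(q₁M₁, q₂M₂) = 1. Choose integers s, t with lcm(q₁,M₁)·s + lcm(q₂,M₂)·t = 1. Then the exponential sum S_{q₁q₂,M}(c) factors as S_{q₁,M₁}(tc)·S_{q₂,M₂}(sc), where S_{q,M}(c) = Σ*_{a mod q} Σ_{y mod lcm(q,M), [y]_M ∈ Ω_M} e_q(aF(y)) e_{lcm(q,M)}(c·y). -/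
open MvPolynomial Finset

/-- `e_q(x) = exp(2πi x/q)`. -/
noncomputable def eFun (q : ℕ) (x : ℤ) : ℂ := Complex.exp (2 * Real.pi * Complex.I * x / q)

/-- The exponential sum `S_{q,M}(c) = Σ*_{a mod q} Σ_{y mod lcm(q,M), [y]_M ∈ Ω_M}
`e_q(aF(y)) e_{lcm(q,M)}(c·y)`. -/
noncomputable def expSum (n : ℕ) (F : MvPolynomial (Fin n) ℤ) (q M : ℕ)
    (Ω : Set (Fin n → ZMod M)) [DecidablePred (· ∈ Ω)] (c : Fin n → ℤ) : ℂ :=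
  ∑ a ∈ (Finset.range q).filter (fun a => Nat.Coprime a q),
    ∑ y ∈ Fintype.piFinset (fun _ : Fin n => Finset.range (Nat.lcm q M)),
      if (fun i => ((y i : ℤ) : ZMod M)) ∈ Ω then
        eFun q (a * eval (fun i => (y i : ℤ)) F)
          * eFun (Nat.lcm q M) (∑ i, c i * (y i : ℤ))
      else 0

lemma eFun_add (q : ℕ) (x y : ℤ) : eFun q (x + y) = eFun q x * eFun q y := by
  unfold eFun; rw [← Complex.exp_add]; congr 1; push_cast; ring

lemma eFun_mul_right (A B : ℕ) (hB : (B : ℂ) ≠ 0) (x : ℤ) :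
    eFun (A * B) (x * B) = eFun A x := by
  unfold eFun; congr 1
  push_cast
  rcases eq_or_ne (A : ℂ) 0 with h | h
  · simp [h]
  · field_simp

lemma eFun_int_shift (q : ℕ) (x : ℤ) (k : ℤ) : eFun q (x + q * k) = eFun q x := by
  rcases Nat.eq_zero_or_pos q with h | h
  · simp [h]
  rw [eFun_add]
  have : eFun q (q * k) = 1 := by
    unfold eFun
    have hq : (q : ℂ) ≠ 0 := Nat.cast_ne_zero.mpr h.ne'
    have : 2 * (Real.pi : ℂ) * Complex.I * (q * k : ℤ) / q = k * (2 * Real.pi * Complex.I) := by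
      push_cast; field_simp
    rw [this, Complex.exp_int_mul_two_pi_mul_I]
  rw [this, mul_one]

lemma eFun_congr (q : ℕ) {x y : ℤ} (h : (x : ZMod q) = (y : ZMod q)) : eFun q x = eFun q y := by
  have hd : (q : ℤ) ∣ x - y := by
    rwa [← ZMod.intCast_zmod_eq_zero_iff_dvd, Int.cast_sub, sub_eq_zero]
  obtain ⟨k, hk⟩ := hd
  have : x = y + q * k := by linarith
  rw [this, eFun_int_shift]

lemma eFun_split (A B : ℕ) (hA : 0 < A) (hB : 0 < B) (u v : ℤ)
    (huv : (A : ℤ) * u + (B : ℤ) * v = 1) (x : ℤ) :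
    eFun (A * B) x = eFun A (v * x) * eFun B (u * x) := by
  have hx : x = (v * x) * B + (u * x) * A := by linear_combination x * huv.symm
  rw [show eFun (A * B) x = eFun (A * B) ((v * x) * B + (u * x) * A) from by rw [← hx],
    eFun_add, eFun_mul_right A B (by exact_mod_cast hB.ne'),
    show (A : ℕ) * B = B * A from Nat.mul_comm A B,
    eFun_mul_right B A (by exact_mod_cast hA.ne')]

lemma cast_int_emod {a b : ℕ} (hb : b ∣ a) (x : ℤ) :
    ((x % (a : ℤ) : ℤ) : ZMod b) = (x : ZMod b) := by
  have h3 : ((a : ℕ) : ZMod b) = 0 := (ZMod.natCast_eq_zero_iff a b).mpr hb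
  rw [Int.emod_def]; push_cast; rw [h3]; ring

lemma cast_toNat_emod {a b : ℕ} (ha : 0 < a) (hb : b ∣ a) (x : ℤ) :
    (((x % (a : ℤ)).toNat : ℕ) : ZMod b) = (x : ZMod b) := by
  have h0 : 0 ≤ x % (a : ℤ) := Int.emod_nonneg x (by exact_mod_cast ha.ne')
  have h1 : (((x % (a : ℤ)).toNat : ℤ) : ZMod b) = ((x % (a : ℤ) : ℤ) : ZMod b) := by
    rw [Int.toNat_of_nonneg h0]
  have h2 : ((x % (a : ℤ) : ℤ) : ZMod b) = (x : ZMod b) := by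
    have h3 : ((a : ℕ) : ZMod b) = 0 := (ZMod.natCast_eq_zero_iff a b).mpr hb
    rw [Int.emod_def]; push_cast
    rw [h3]; ring
  calc (((x % (a : ℤ)).toNat : ℕ) : ZMod b) = (((x % (a : ℤ)).toNat : ℤ) : ZMod b) := by
        push_cast; ring
    _ = (x : ZMod b) := by rw [h1, h2]

lemma cast_nat_mod {a b : ℕ} (hb : b ∣ a) (x : ℕ) :
    ((x % a : ℕ) : ZMod b) = (x : ZMod b) := by
  conv_rhs => rw [← Nat.mod_add_div x a]
  push_cast
  rw [(ZMod.natCast_eq_zero_iff a b).mpr hb]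
  ring

lemma natCast_mod_int (a b : ℕ) : ((a % b : ℕ) : ℤ) = (a : ℤ) % (b : ℤ) := rfl

lemma nat_eq_of_zmod {N a b : ℕ} (ha : a < N) (hb : b < N) (h : (a : ZMod N) = b) : a = b := by
  haveI : NeZero N := ⟨(Nat.lt_of_le_of_lt (Nat.zero_le a) ha).ne'⟩
  rw [← ZMod.val_cast_of_lt ha, ← ZMod.val_cast_of_lt hb, h]

lemma eval_zmod {n : ℕ} (q : ℕ) (F : MvPolynomial (Fin n) ℤ) (y z : Fin n → ℤ)
    (h : ∀ i, ((y i : ZMod q)) = (z i : ZMod q)) :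
    ((eval y F : ℤ) : ZMod q) = ((eval z F : ℤ) : ZMod q) := by
  have key : ∀ w : Fin n → ℤ, ((eval w F : ℤ) : ZMod q)
      = eval₂ (Int.castRingHom (ZMod q)) (fun i => ((w i : ZMod q))) F := by
    intro w
    have h := MvPolynomial.eval₂_comp_left (Int.castRingHom (ZMod q)) (RingHom.id ℤ) w F
    rw [MvPolynomial.eval₂_id] at h
    rw [show (Int.castRingHom (ZMod q)).comp (RingHom.id ℤ) = Int.castRingHom (ZMod q) from
      RingHom.comp_id _] at h
    exact h
  rw [key y, key z]
  congr 1
  funext i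
  exact h i

/-- Multiplicativity of the exponential sum `S_{q,M}(c)`: if `M = M₁M₂`, `q = q₁q₂`
with `gcd(q₁M₁, q₂M₂) = 1` and `lcm(q₁,M₁)·s + lcm(q₂,M₂)·t = 1`, and `Ω_M`
corresponds to `Ω_{M₁} × Ω_{M₂}` under CRT, then
`S_{q₁q₂,M}(c) = S_{q₁,M₁}(tc)·S_{q₂,M₂}(sc)`. -/
theorem stmt_5 (n : ℕ) (F : MvPolynomial (Fin n) ℤ) (hF : F.IsHomogeneous 2)
    (q₁ q₂ M₁ M₂ : ℕ) (hq₁ : 0 < q₁) (hq₂ : 0 < q₂) (hM₁ : 0 < M₁) (hM₂ : 0 < M₂)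
    (hco : Nat.Coprime (q₁ * M₁) (q₂ * M₂))
    (s t : ℤ) (hst : (Nat.lcm q₁ M₁ : ℤ) * s + (Nat.lcm q₂ M₂ : ℤ) * t = 1)
    (Ω : Set (Fin n → ZMod (M₁ * M₂))) [DecidablePred (· ∈ Ω)]
    (Ω₁ : Set (Fin n → ZMod M₁)) [DecidablePred (· ∈ Ω₁)]
    (Ω₂ : Set (Fin n → ZMod M₂)) [DecidablePred (· ∈ Ω₂)]
    (hCRT : ∀ y : Fin n → ℤ,
      (fun i => ((y i : ZMod (M₁ * M₂)))) ∈ Ω ↔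
        ((fun i => ((y i : ZMod M₁))) ∈ Ω₁ ∧ (fun i => ((y i : ZMod M₂))) ∈ Ω₂))
    (c : Fin n → ℤ) :
    expSum n F (q₁ * q₂) (M₁ * M₂) Ω c
      = expSum n F q₁ M₁ Ω₁ (fun i => t * c i) * expSum n F q₂ M₂ Ω₂ (fun i => s * c i) := by
  classical
  set L₁ := Nat.lcm q₁ M₁ with hL₁def
  set L₂ := Nat.lcm q₂ M₂ with hL₂def
  have hq₁L : q₁ ∣ L₁ := Nat.dvd_lcm_left _ _
  have hM₁L : M₁ ∣ L₁ := Nat.dvd_lcm_right _ _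
  have hq₂L : q₂ ∣ L₂ := Nat.dvd_lcm_left _ _
  have hM₂L : M₂ ∣ L₂ := Nat.dvd_lcm_right _ _
  have hL₁qM : L₁ ∣ q₁ * M₁ := Nat.lcm_dvd (dvd_mul_right _ _) (dvd_mul_left _ _)
  have hL₂qM : L₂ ∣ q₂ * M₂ := Nat.lcm_dvd (dvd_mul_right _ _) (dvd_mul_left _ _)
  have hL₁pos : 0 < L₁ := Nat.lcm_pos hq₁ hM₁
  have hL₂pos : 0 < L₂ := Nat.lcm_pos hq₂ hM₂
  have hq₁₂pos : 0 < q₁ * q₂ := Nat.mul_pos hq₁ hq₂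
  have hLLpos : 0 < L₁ * L₂ := Nat.mul_pos hL₁pos hL₂pos
  have hcoL : Nat.Coprime L₁ L₂ :=
    Nat.Coprime.coprime_dvd_left hL₁qM (Nat.Coprime.coprime_dvd_right hL₂qM hco)
  have hq₁q₂co : Nat.Coprime q₁ q₂ :=
    Nat.Coprime.coprime_dvd_left (dvd_mul_right _ _)
      (Nat.Coprime.coprime_dvd_right (dvd_mul_right _ _) hco)
  -- the lcm of the products is the product of the lcms
  have hLL : Nat.lcm (q₁ * q₂) (M₁ * M₂) = L₁ * L₂ := by
    apply Nat.dvd_antisymm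
    · exact Nat.lcm_dvd (mul_dvd_mul hq₁L hq₂L) (mul_dvd_mul hM₁L hM₂L)
    · refine Nat.Coprime.mul_dvd_of_dvd_of_dvd hcoL ?_ ?_
      · exact Nat.lcm_dvd (dvd_trans (dvd_mul_right q₁ q₂) (Nat.dvd_lcm_left _ _))
          (dvd_trans (dvd_mul_right M₁ M₂) (Nat.dvd_lcm_right _ _))
      · exact Nat.lcm_dvd (dvd_trans (dvd_mul_left q₂ q₁) (Nat.dvd_lcm_left _ _))
          (dvd_trans (dvd_mul_left M₂ M₁) (Nat.dvd_lcm_right _ _))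
  set m₁ := L₁ / q₁ with hm₁def
  set m₂ := L₂ / q₂ with hm₂def
  have hm₁ : q₁ * m₁ = L₁ := Nat.mul_div_cancel' hq₁L
  have hm₂ : q₂ * m₂ = L₂ := Nat.mul_div_cancel' hq₂L
  -- index sets
  set A : Finset ℕ := (Finset.range (q₁ * q₂)).filter (fun a => Nat.Coprime a (q₁ * q₂)) with hA
  set A₁ : Finset ℕ := (Finset.range q₁).filter (fun a => Nat.Coprime a q₁) with hA₁
  set A₂ : Finset ℕ := (Finset.range q₂).filter (fun a => Nat.Coprime a q₂) with hA₂
  set Y : Finset (Fin n → ℕ) := Fintype.piFinset (fun _ : Fin n => Finset.range (L₁ * L₂)) with hY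
  set Y₁ : Finset (Fin n → ℕ) := Fintype.piFinset (fun _ : Fin n => Finset.range L₁) with hY₁
  set Y₂ : Finset (Fin n → ℕ) := Fintype.piFinset (fun _ : Fin n => Finset.range L₂) with hY₂
  -- summands
  set fL : ℕ × (Fin n → ℕ) → ℂ := fun p =>
    if (fun i => ((p.2 i : ℤ) : ZMod (M₁ * M₂))) ∈ Ω then
      eFun (q₁ * q₂) (p.1 * eval (fun i => (p.2 i : ℤ)) F)
        * eFun (L₁ * L₂) (∑ i, c i * (p.2 i : ℤ))
    else 0 with hfL
  set g₁ : ℕ × (Fin n → ℕ) → ℂ := fun p =>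
    if (fun i => ((p.2 i : ℤ) : ZMod M₁)) ∈ Ω₁ then
      eFun q₁ (p.1 * eval (fun i => (p.2 i : ℤ)) F)
        * eFun L₁ (∑ i, (t * c i) * (p.2 i : ℤ))
    else 0 with hg₁
  set g₂ : ℕ × (Fin n → ℕ) → ℂ := fun p =>
    if (fun i => ((p.2 i : ℤ) : ZMod M₂)) ∈ Ω₂ then
      eFun q₂ (p.1 * eval (fun i => (p.2 i : ℤ)) F)
        * eFun L₂ (∑ i, (s * c i) * (p.2 i : ℤ))
    else 0 with hg₂
  -- rewrite both sides as sums over product finsets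
  have hLHS : expSum n F (q₁ * q₂) (M₁ * M₂) Ω c = ∑ p ∈ A ×ˢ Y, fL p := by
    rw [expSum, hLL, Finset.sum_product]
  have hRHS₁ : expSum n F q₁ M₁ Ω₁ (fun i => t * c i) = ∑ p ∈ A₁ ×ˢ Y₁, g₁ p := by
    rw [expSum, Finset.sum_product]
  have hRHS₂ : expSum n F q₂ M₂ Ω₂ (fun i => s * c i) = ∑ p ∈ A₂ ×ˢ Y₂, g₂ p := by
    rw [expSum, Finset.sum_product]
  rw [hLHS, hRHS₁, hRHS₂, Finset.sum_mul_sum]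
  rw [← Finset.sum_product']
  -- ZMod facts
  haveI : NeZero q₁ := ⟨hq₁.ne'⟩
  haveI : NeZero q₂ := ⟨hq₂.ne'⟩
  -- casts of hst into various ZMod rings
  have hcast : ∀ (b : ℕ), ((L₁ : ℤ) : ZMod b) * (s : ZMod b) + ((L₂ : ℤ) : ZMod b) * (t : ZMod b)
      = 1 := by
    intro b
    have := congrArg (fun z : ℤ => (z : ZMod b)) hst
    push_cast at this
    push_cast
    linear_combination this
  have hu₁ : ∀ (b : ℕ), b ∣ L₁ → ((L₂ : ℕ) : ZMod b) * ((t : ℤ) : ZMod b) = 1 := by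
    intro b hb
    have h0 : ((L₁ : ℕ) : ZMod b) = 0 := (ZMod.natCast_eq_zero_iff _ _).mpr hb
    have h1 := hcast b
    push_cast at h1
    linear_combination h1 - (s : ZMod b) * h0
  have hu₂ : ∀ (b : ℕ), b ∣ L₂ → ((L₁ : ℕ) : ZMod b) * ((s : ℤ) : ZMod b) = 1 := by
    intro b hb
    have h0 : ((L₂ : ℕ) : ZMod b) = 0 := (ZMod.natCast_eq_zero_iff _ _).mpr hb
    have h1 := hcast b
    push_cast at h1
    linear_combination h1 - (t : ZMod b) * h0
  -- the bijection
  refine Finset.sum_nbij'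
    (i := fun p => (((((m₂ : ℤ) * t * p.1) % (q₁ : ℤ)).toNat, fun k => p.2 k % L₁),
                    ((((m₁ : ℤ) * s * p.1) % (q₂ : ℤ)).toNat, fun k => p.2 k % L₂)))
    (j := fun r => ((((r.1.1 : ℤ) * q₂ * L₂ * t + (r.2.1 : ℤ) * q₁ * L₁ * s)
                        % ((q₁ * q₂ : ℕ) : ℤ)).toNat,
                    fun k => ((((r.1.2 k : ℤ) * L₂ * t + (r.2.2 k : ℤ) * L₁ * s)
                        % ((L₁ * L₂ : ℕ) : ℤ)).toNat)))
    ?_ ?_ ?_ ?_ ?_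
  · -- forward membership
    rintro ⟨a, y⟩ hp
    dsimp only
    rw [Finset.mem_product] at hp
    obtain ⟨haA, hyY⟩ := hp
    rw [hA, Finset.mem_filter, Finset.mem_range] at haA
    obtain ⟨haR, haCo⟩ := haA
    rw [Finset.mem_product]
    constructor
    · rw [Finset.mem_product]
      constructor
      · rw [hA₁, Finset.mem_filter, Finset.mem_range]
        constructor
        · have h1 := Int.emod_nonneg ((m₂ : ℤ) * t * a) (show ((q₁:ℕ):ℤ) ≠ 0 by exact_mod_cast hq₁.ne')
          have h2 := Int.emod_lt_of_pos ((m₂ : ℤ) * t * a) (show (0:ℤ) < ((q₁:ℕ):ℤ) by exact_mod_cast hq₁)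
          dsimp only
          omega
        · rw [← ZMod.isUnit_iff_coprime]
          have hcst : (((((m₂ : ℤ) * t * a) % (q₁ : ℤ)).toNat : ℕ) : ZMod q₁)
              = ((m₂ : ZMod q₁) * ((t : ℤ) : ZMod q₁)) * ((a : ℕ) : ZMod q₁) := by
            rw [cast_toNat_emod hq₁ dvd_rfl]; push_cast; ring
          rw [hcst]
          apply IsUnit.mul
          · apply IsUnit.of_mul_eq_one ((q₂ : ℕ) : ZMod q₁)
            have hc := congrArg (Nat.cast : ℕ → ZMod q₁) hm₂
            push_cast at hc
            have := hu₁ q₁ hq₁L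
            linear_combination ((t : ℤ) : ZMod q₁) * hc + this
          · exact (ZMod.isUnit_iff_coprime a q₁).mpr
              (Nat.Coprime.coprime_dvd_right (dvd_mul_right q₁ q₂) haCo)
      · rw [hY₁, Fintype.mem_piFinset]
        intro k
        rw [Finset.mem_range]
        exact Nat.mod_lt _ hL₁pos
    · rw [Finset.mem_product]
      constructor
      · rw [hA₂, Finset.mem_filter, Finset.mem_range]
        constructor
        · have h1 := Int.emod_nonneg ((m₁ : ℤ) * s * a) (show ((q₂:ℕ):ℤ) ≠ 0 by exact_mod_cast hq₂.ne')
          have h2 := Int.emod_lt_of_pos ((m₁ : ℤ) * s * a) (show (0:ℤ) < ((q₂:ℕ):ℤ) by exact_mod_cast hq₂)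
          dsimp only
          omega
        · rw [← ZMod.isUnit_iff_coprime]
          have hcst : (((((m₁ : ℤ) * s * a) % (q₂ : ℤ)).toNat : ℕ) : ZMod q₂)
              = ((m₁ : ZMod q₂) * ((s : ℤ) : ZMod q₂)) * ((a : ℕ) : ZMod q₂) := by
            rw [cast_toNat_emod hq₂ dvd_rfl]; push_cast; ring
          rw [hcst]
          apply IsUnit.mul
          · apply IsUnit.of_mul_eq_one ((q₁ : ℕ) : ZMod q₂)
            have hc := congrArg (Nat.cast : ℕ → ZMod q₂) hm₁
            push_cast at hc
            have := hu₂ q₂ hq₂L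
            linear_combination ((s : ℤ) : ZMod q₂) * hc + this
          · exact (ZMod.isUnit_iff_coprime a q₂).mpr
              (Nat.Coprime.coprime_dvd_right (dvd_mul_left q₂ q₁) haCo)
      · rw [hY₂, Fintype.mem_piFinset]
        intro k
        rw [Finset.mem_range]
        exact Nat.mod_lt _ hL₂pos
  · -- backward membership
    rintro ⟨⟨a₁, y₁⟩, ⟨a₂, y₂⟩⟩ hr
    dsimp only
    rw [Finset.mem_product] at hr
    obtain ⟨hr₁, hr₂⟩ := hr
    rw [Finset.mem_product] at hr₁ hr₂
    obtain ⟨ha₁, hy₁⟩ := hr₁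
    obtain ⟨ha₂, hy₂⟩ := hr₂
    rw [hA₁, Finset.mem_filter, Finset.mem_range] at ha₁
    rw [hA₂, Finset.mem_filter, Finset.mem_range] at ha₂
    rw [hY₁, Fintype.mem_piFinset] at hy₁
    rw [hY₂, Fintype.mem_piFinset] at hy₂
    rw [Finset.mem_product]
    constructor
    · rw [hA, Finset.mem_filter, Finset.mem_range]
      constructor
      · have h1 := Int.emod_nonneg ((a₁ : ℤ) * q₂ * L₂ * t + (a₂ : ℤ) * q₁ * L₁ * s)
          (show ((q₁ * q₂ : ℕ) : ℤ) ≠ 0 by exact_mod_cast hq₁₂pos.ne')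
        have h2 := Int.emod_lt_of_pos ((a₁ : ℤ) * q₂ * L₂ * t + (a₂ : ℤ) * q₁ * L₁ * s)
          (show (0 : ℤ) < ((q₁ * q₂ : ℕ) : ℤ) by exact_mod_cast hq₁₂pos)
        omega
      · rw [Nat.coprime_mul_iff_right]
        constructor
        · rw [← ZMod.isUnit_iff_coprime]
          have hcst := cast_toNat_emod (a := q₁ * q₂) (b := q₁) hq₁₂pos (dvd_mul_right _ _)
            ((a₁ : ℤ) * q₂ * L₂ * t + (a₂ : ℤ) * q₁ * L₁ * s)
          rw [hcst]
          have hq₁0 : ((q₁ : ℕ) : ZMod q₁) = 0 := ZMod.natCast_self q₁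
          have hu := hu₁ q₁ hq₁L
          have hval : (((a₁ : ℤ) * q₂ * L₂ * t + (a₂ : ℤ) * q₁ * L₁ * s : ℤ) : ZMod q₁)
              = ((a₁ : ℕ) : ZMod q₁) * ((q₂ : ℕ) : ZMod q₁) := by
            push_cast
            push_cast at hu
            linear_combination ((a₁ : ZMod q₁) * (q₂ : ZMod q₁)) * hu
              + ((a₂ : ZMod q₁) * (L₁ : ZMod q₁) * (s : ZMod q₁)) * hq₁0
          rw [hval]
          exact IsUnit.mul ((ZMod.isUnit_iff_coprime a₁ q₁).mpr ha₁.2)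
            ((ZMod.isUnit_iff_coprime q₂ q₁).mpr hq₁q₂co.symm)
        · rw [← ZMod.isUnit_iff_coprime]
          have hcst := cast_toNat_emod (a := q₁ * q₂) (b := q₂) hq₁₂pos (dvd_mul_left _ _)
            ((a₁ : ℤ) * q₂ * L₂ * t + (a₂ : ℤ) * q₁ * L₁ * s)
          rw [hcst]
          have hq₂0 : ((q₂ : ℕ) : ZMod q₂) = 0 := ZMod.natCast_self q₂
          have hu := hu₂ q₂ hq₂L
          have hval : (((a₁ : ℤ) * q₂ * L₂ * t + (a₂ : ℤ) * q₁ * L₁ * s : ℤ) : ZMod q₂)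
              = ((a₂ : ℕ) : ZMod q₂) * ((q₁ : ℕ) : ZMod q₂) := by
            push_cast
            push_cast at hu
            linear_combination ((a₂ : ZMod q₂) * (q₁ : ZMod q₂)) * hu
              + ((a₁ : ZMod q₂) * (L₂ : ZMod q₂) * (t : ZMod q₂)) * hq₂0
          rw [hval]
          exact IsUnit.mul ((ZMod.isUnit_iff_coprime a₂ q₂).mpr ha₂.2)
            ((ZMod.isUnit_iff_coprime q₁ q₂).mpr hq₁q₂co)
    · rw [hY, Fintype.mem_piFinset]
      intro k
      rw [Finset.mem_range]
      have h1 := Int.emod_nonneg ((y₁ k : ℤ) * L₂ * t + (y₂ k : ℤ) * L₁ * s)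
        (show ((L₁ * L₂ : ℕ) : ℤ) ≠ 0 by exact_mod_cast hLLpos.ne')
      have h2 := Int.emod_lt_of_pos ((y₁ k : ℤ) * L₂ * t + (y₂ k : ℤ) * L₁ * s)
        (show (0 : ℤ) < ((L₁ * L₂ : ℕ) : ℤ) by exact_mod_cast hLLpos)
      dsimp only
      omega
  · -- left inverse
    rintro ⟨a, y⟩ hp
    dsimp only
    rw [Finset.mem_product] at hp
    obtain ⟨haA, hyY⟩ := hp
    rw [hA, Finset.mem_filter, Finset.mem_range] at haA
    rw [hY, Fintype.mem_piFinset] at hyY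
    simp only [Prod.mk.injEq]
    constructor
    · -- the a-component
      refine nat_eq_of_zmod (N := q₁ * q₂) ?_ haA.1 ?_
      · have h1 := Int.emod_nonneg
          (((((m₂ : ℤ) * t * a) % (q₁ : ℤ)).toNat : ℤ) * q₂ * L₂ * t
            + ((((m₁ : ℤ) * s * a) % (q₂ : ℤ)).toNat : ℤ) * q₁ * L₁ * s)
          (show ((q₁ * q₂ : ℕ) : ℤ) ≠ 0 by exact_mod_cast hq₁₂pos.ne')
        have h2 := Int.emod_lt_of_pos
          (((((m₂ : ℤ) * t * a) % (q₁ : ℤ)).toNat : ℤ) * q₂ * L₂ * t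
            + ((((m₁ : ℤ) * s * a) % (q₂ : ℤ)).toNat : ℤ) * q₁ * L₁ * s)
          (show (0 : ℤ) < ((q₁ * q₂ : ℕ) : ℤ) by exact_mod_cast hq₁₂pos)
        omega
      · -- the ZMod computation
        have e₁ : ((((((m₂ : ℤ) * t * a) % (q₁ : ℤ)).toNat : ℕ)) : ℤ) = (m₂ : ℤ) * t * a - (q₁ : ℤ) * (((m₂ : ℤ) * t * a) / (q₁ : ℤ)) := by
          rw [Int.toNat_of_nonneg (Int.emod_nonneg _ (show ((q₁:ℕ):ℤ) ≠ 0 by exact_mod_cast hq₁.ne'))]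
          exact Int.emod_def _ _
        have e₂ : ((((((m₁ : ℤ) * s * a) % (q₂ : ℤ)).toNat : ℕ)) : ℤ) = (m₁ : ℤ) * s * a - (q₂ : ℤ) * (((m₁ : ℤ) * s * a) / (q₂ : ℤ)) := by
          rw [Int.toNat_of_nonneg (Int.emod_nonneg _ (show ((q₂:ℕ):ℤ) ≠ 0 by exact_mod_cast hq₂.ne'))]
          exact Int.emod_def _ _
        rw [cast_toNat_emod hq₁₂pos dvd_rfl, e₁, e₂]
        set N := q₁ * q₂ with hN
        set k₁ : ℤ := ((m₂ : ℤ) * t * a) / (q₁ : ℤ) with hk₁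
        set k₂ : ℤ := ((m₁ : ℤ) * s * a) / (q₂ : ℤ) with hk₂
        have hq1q2 : ((q₁ : ℕ) : ZMod N) * ((q₂ : ℕ) : ZMod N) = 0 := by
          rw [← Nat.cast_mul, ← hN]; exact ZMod.natCast_self N
        have hLL0 : ((L₁ : ℕ) : ZMod N) * ((L₂ : ℕ) : ZMod N) = 0 := by
          rw [← Nat.cast_mul]
          exact (ZMod.natCast_eq_zero_iff _ _).mpr (mul_dvd_mul hq₁L hq₂L)
        have hm₁N : ((q₁ : ℕ) : ZMod N) * ((m₁ : ℕ) : ZMod N) = ((L₁ : ℕ) : ZMod N) := by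
          rw [← Nat.cast_mul, hm₁]
        have hm₂N : ((q₂ : ℕ) : ZMod N) * ((m₂ : ℕ) : ZMod N) = ((L₂ : ℕ) : ZMod N) := by
          rw [← Nat.cast_mul, hm₂]
        have hstN := hcast N
        push_cast at hstN
        have hXY : (((L₁ : ℕ) : ZMod N) * (s : ZMod N)) * (((L₂ : ℕ) : ZMod N) * (t : ZMod N)) = 0 := by
          linear_combination ((s : ZMod N) * (t : ZMod N)) * hLL0
        push_cast
        linear_combination ((a : ZMod N) * (t : ZMod N) ^ 2 * ((L₂ : ℕ) : ZMod N)) * hm₂N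
          + ((a : ZMod N) * (s : ZMod N) ^ 2 * ((L₁ : ℕ) : ZMod N)) * hm₁N
          + (-(( k₁ : ZMod N) * (t : ZMod N) * ((L₂ : ℕ) : ZMod N))
             - (k₂ : ZMod N) * (s : ZMod N) * ((L₁ : ℕ) : ZMod N)) * hq1q2
          + ((a : ZMod N) * (((L₁ : ℕ) : ZMod N) * (s : ZMod N)
             + ((L₂ : ℕ) : ZMod N) * (t : ZMod N) + 1)) * hstN
          + (-(2 * (a : ZMod N))) * hXY
    · -- the y-component
      funext k
      have hyk := hyY k
      rw [Finset.mem_range] at hyk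
      refine nat_eq_of_zmod (N := L₁ * L₂) ?_ hyk ?_
      · have h1 := Int.emod_nonneg (((y k % L₁ : ℕ) : ℤ) * L₂ * t + ((y k % L₂ : ℕ) : ℤ) * L₁ * s)
          (show ((L₁ * L₂ : ℕ) : ℤ) ≠ 0 by exact_mod_cast hLLpos.ne')
        have h2 := Int.emod_lt_of_pos (((y k % L₁ : ℕ) : ℤ) * L₂ * t + ((y k % L₂ : ℕ) : ℤ) * L₁ * s)
          (show (0 : ℤ) < ((L₁ * L₂ : ℕ) : ℤ) by exact_mod_cast hLLpos)
        omega
      · rw [cast_toNat_emod hLLpos dvd_rfl]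
        set N := L₁ * L₂ with hN
        have e₁ : (((y k % L₁ : ℕ) : ℤ)) = (y k : ℤ) - (L₁ : ℤ) * ((y k : ℤ) / (L₁ : ℤ)) := by
          push_cast [natCast_mod_int]
          rw [Int.emod_def]
        have e₂ : (((y k % L₂ : ℕ) : ℤ)) = (y k : ℤ) - (L₂ : ℤ) * ((y k : ℤ) / (L₂ : ℤ)) := by
          push_cast [natCast_mod_int]
          rw [Int.emod_def]
        have hLL0 : ((L₁ : ℕ) : ZMod N) * ((L₂ : ℕ) : ZMod N) = 0 := by
          rw [← Nat.cast_mul, ← hN]; exact ZMod.natCast_self N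
        have hstN := hcast N
        push_cast at hstN
        set j₁ : ℤ := (y k : ℤ) / (L₁ : ℤ) with hj₁
        set j₂ : ℤ := (y k : ℤ) / (L₂ : ℤ) with hj₂
        rw [show (((y k % L₁ : ℕ) : ℤ) * L₂ * t + ((y k % L₂ : ℕ) : ℤ) * L₁ * s : ℤ)
            = ((y k : ℤ) - (L₁ : ℤ) * j₁) * L₂ * t + ((y k : ℤ) - (L₂ : ℤ) * j₂) * L₁ * s from by
              rw [← e₁, ← e₂]]
        push_cast
        linear_combination ((y k : ZMod N)) * hstN
          + (-((j₁ : ZMod N) * (t : ZMod N)) - (j₂ : ZMod N) * (s : ZMod N)) * hLL0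
  · -- right inverse
    rintro ⟨⟨a₁, y₁⟩, ⟨a₂, y₂⟩⟩ hr
    dsimp only
    rw [Finset.mem_product] at hr
    obtain ⟨hr₁, hr₂⟩ := hr
    rw [Finset.mem_product] at hr₁ hr₂
    obtain ⟨ha₁, hy₁⟩ := hr₁
    obtain ⟨ha₂, hy₂⟩ := hr₂
    rw [hA₁, Finset.mem_filter, Finset.mem_range] at ha₁
    rw [hA₂, Finset.mem_filter, Finset.mem_range] at ha₂
    rw [hY₁, Fintype.mem_piFinset] at hy₁
    rw [hY₂, Fintype.mem_piFinset] at hy₂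
    set X : ℤ := (a₁ : ℤ) * q₂ * L₂ * t + (a₂ : ℤ) * q₁ * L₁ * s with hX
    set Av : ℕ := (X % ((q₁ * q₂ : ℕ) : ℤ)).toNat with hAv
    have hAvcast : ∀ (b : ℕ), b ∣ q₁ * q₂ → ((Av : ℕ) : ZMod b) = (X : ZMod b) := by
      intro b hb
      rw [hAv, cast_toNat_emod hq₁₂pos hb]
    simp only [Prod.mk.injEq]
    refine ⟨⟨?_, ?_⟩, ?_, ?_⟩
    · -- a₁ recovered
      refine nat_eq_of_zmod (N := q₁) ?_ ha₁.1 ?_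
      · have h1 := Int.emod_nonneg ((m₂ : ℤ) * t * (Av : ℕ)) (show ((q₁ : ℕ) : ℤ) ≠ 0 by exact_mod_cast hq₁.ne')
        have h2 := Int.emod_lt_of_pos ((m₂ : ℤ) * t * (Av : ℕ)) (show (0 : ℤ) < ((q₁ : ℕ) : ℤ) by exact_mod_cast hq₁)
        omega
      · rw [cast_toNat_emod hq₁ dvd_rfl]
        have eA : ((Av : ℕ) : ℤ) = X - ((q₁ * q₂ : ℕ) : ℤ) * (X / ((q₁ * q₂ : ℕ) : ℤ)) := by
          rw [hAv, Int.toNat_of_nonneg (Int.emod_nonneg _ (show ((q₁*q₂:ℕ):ℤ) ≠ 0 by exact_mod_cast hq₁₂pos.ne'))]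
          rw [Int.emod_def]
        set k : ℤ := X / ((q₁ * q₂ : ℕ) : ℤ) with hk
        rw [show ((m₂ : ℤ) * t * (Av : ℕ) : ℤ)
            = (m₂ : ℤ) * t * (X - ((q₁ * q₂ : ℕ) : ℤ) * k) from by rw [← eA]]
        have hq₁0 : ((q₁ : ℕ) : ZMod q₁) = 0 := ZMod.natCast_self q₁
        have hu := hu₁ q₁ hq₁L
        push_cast at hu
        have hm₂c : ((q₂ : ℕ) : ZMod q₁) * ((m₂ : ℕ) : ZMod q₁) = ((L₂ : ℕ) : ZMod q₁) := by
          rw [← Nat.cast_mul, hm₂]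
        rw [hX]
        push_cast
        linear_combination ((a₁ : ZMod q₁) * (t : ZMod q₁) ^ 2 * ((L₂ : ℕ) : ZMod q₁)) * hm₂c
          + ((a₁ : ZMod q₁) * (((L₂ : ℕ) : ZMod q₁) * (t : ZMod q₁) + 1)) * hu
          + (((m₂ : ℕ) : ZMod q₁) * (t : ZMod q₁) * ((a₂ : ZMod q₁) * ((L₁ : ℕ) : ZMod q₁) * (s : ZMod q₁)
              - ((q₂ : ℕ) : ZMod q₁) * (k : ZMod q₁))) * hq₁0
    · -- y₁ recovered
      funext k
      have hybound := hy₁ k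
      rw [Finset.mem_range] at hybound
      set Z : ℤ := (y₁ k : ℤ) * L₂ * t + (y₂ k : ℤ) * L₁ * s with hZ
      set W : ℕ := (Z % ((L₁ * L₂ : ℕ) : ℤ)).toNat with hW
      apply nat_eq_of_zmod (N := L₁) (Nat.mod_lt _ hL₁pos) hybound
      rw [cast_nat_mod (dvd_refl L₁), hW, cast_toNat_emod hLLpos (dvd_mul_right _ _), hZ]
      have hL₁0 : ((L₁ : ℕ) : ZMod L₁) = 0 := ZMod.natCast_self L₁
      have hu := hu₁ L₁ dvd_rfl
      push_cast at hu
      push_cast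
      linear_combination (y₁ k : ZMod L₁) * hu + ((y₂ k : ZMod L₁) * (s : ZMod L₁)) * hL₁0
    · -- a₂ recovered
      refine nat_eq_of_zmod (N := q₂) ?_ ha₂.1 ?_
      · have h1 := Int.emod_nonneg ((m₁ : ℤ) * s * (Av : ℕ)) (show ((q₂ : ℕ) : ℤ) ≠ 0 by exact_mod_cast hq₂.ne')
        have h2 := Int.emod_lt_of_pos ((m₁ : ℤ) * s * (Av : ℕ)) (show (0 : ℤ) < ((q₂ : ℕ) : ℤ) by exact_mod_cast hq₂)
        omega
      · rw [cast_toNat_emod hq₂ dvd_rfl]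
        have eA : ((Av : ℕ) : ℤ) = X - ((q₁ * q₂ : ℕ) : ℤ) * (X / ((q₁ * q₂ : ℕ) : ℤ)) := by
          rw [hAv, Int.toNat_of_nonneg (Int.emod_nonneg _ (show ((q₁*q₂:ℕ):ℤ) ≠ 0 by exact_mod_cast hq₁₂pos.ne'))]
          rw [Int.emod_def]
        set k : ℤ := X / ((q₁ * q₂ : ℕ) : ℤ) with hk
        rw [show ((m₁ : ℤ) * s * (Av : ℕ) : ℤ)
            = (m₁ : ℤ) * s * (X - ((q₁ * q₂ : ℕ) : ℤ) * k) from by rw [← eA]]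
        have hq₂0 : ((q₂ : ℕ) : ZMod q₂) = 0 := ZMod.natCast_self q₂
        have hu := hu₂ q₂ hq₂L
        push_cast at hu
        have hm₁c : ((q₁ : ℕ) : ZMod q₂) * ((m₁ : ℕ) : ZMod q₂) = ((L₁ : ℕ) : ZMod q₂) := by
          rw [← Nat.cast_mul, hm₁]
        rw [hX]
        push_cast
        linear_combination ((a₂ : ZMod q₂) * (s : ZMod q₂) ^ 2 * ((L₁ : ℕ) : ZMod q₂)) * hm₁c
          + ((a₂ : ZMod q₂) * (((L₁ : ℕ) : ZMod q₂) * (s : ZMod q₂) + 1)) * hu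
          + (((m₁ : ℕ) : ZMod q₂) * (s : ZMod q₂) * ((a₁ : ZMod q₂) * ((L₂ : ℕ) : ZMod q₂) * (t : ZMod q₂)
              - ((q₁ : ℕ) : ZMod q₂) * (k : ZMod q₂))) * hq₂0
    · -- y₂ recovered
      funext k
      have hybound := hy₂ k
      rw [Finset.mem_range] at hybound
      set Z : ℤ := (y₁ k : ℤ) * L₂ * t + (y₂ k : ℤ) * L₁ * s with hZ
      set W : ℕ := (Z % ((L₁ * L₂ : ℕ) : ℤ)).toNat with hW
      apply nat_eq_of_zmod (N := L₂) (Nat.mod_lt _ hL₂pos) hybound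
      rw [cast_nat_mod (dvd_refl L₂), hW, cast_toNat_emod hLLpos (dvd_mul_left _ _), hZ]
      have hL₂0 : ((L₂ : ℕ) : ZMod L₂) = 0 := ZMod.natCast_self L₂
      have hu := hu₂ L₂ dvd_rfl
      push_cast at hu
      push_cast
      linear_combination (y₂ k : ZMod L₂) * hu + ((y₁ k : ZMod L₂) * (t : ZMod L₂)) * hL₂0
  · -- values agree
    rintro ⟨a, y⟩ hp
    dsimp only
    rw [Finset.mem_product] at hp
    obtain ⟨haA, hyY⟩ := hp
    rw [hA, Finset.mem_filter, Finset.mem_range] at haA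
    rw [hY, Fintype.mem_piFinset] at hyY
    set a₁ : ℕ := (((m₂ : ℤ) * t * a) % (q₁ : ℤ)).toNat with ha₁v
    set a₂ : ℕ := (((m₁ : ℤ) * s * a) % (q₂ : ℤ)).toNat with ha₂v
    have ha₁c : ((a₁ : ℕ) : ZMod q₁) = ((m₂ : ℕ) : ZMod q₁) * ((t : ℤ) : ZMod q₁) * ((a : ℕ) : ZMod q₁) := by
      rw [ha₁v, cast_toNat_emod hq₁ dvd_rfl]; push_cast; ring
    have ha₂c : ((a₂ : ℕ) : ZMod q₂) = ((m₁ : ℕ) : ZMod q₂) * ((s : ℤ) : ZMod q₂) * ((a : ℕ) : ZMod q₂) := by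
      rw [ha₂v, cast_toNat_emod hq₂ dvd_rfl]; push_cast; ring
    -- condition equivalence
    have hset1 : (fun i => (((y i % L₁ : ℕ) : ℤ) : ZMod M₁)) = (fun i => ((y i : ℤ) : ZMod M₁)) := by
      funext i
      push_cast [natCast_mod_int]
      rw [cast_int_emod (a := L₁) (b := M₁) hM₁L ((y i : ℕ) : ℤ)]
      push_cast
      ring
    have hset2 : (fun i => (((y i % L₂ : ℕ) : ℤ) : ZMod M₂)) = (fun i => ((y i : ℤ) : ZMod M₂)) := by
      funext i
      push_cast [natCast_mod_int]
      rw [cast_int_emod (a := L₂) (b := M₂) hM₂L ((y i : ℕ) : ℤ)]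
      push_cast
      ring
    have hCRT' := hCRT (fun i => (y i : ℤ))
    show fL (a, y) = g₁ (a₁, fun k => y k % L₁) * g₂ (a₂, fun k => y k % L₂)
    rw [hfL, hg₁, hg₂]
    simp only
    rw [hset1, hset2]
    by_cases hΩ : (fun i => ((y i : ℤ) : ZMod (M₁ * M₂))) ∈ Ω
    · have hc12 := (hCRT' ).mp hΩ
      rw [if_pos hΩ, if_pos hc12.1, if_pos hc12.2]
      -- now the genuine character identity
      have hsplitq : (q₁ : ℤ) * ((m₁ : ℤ) * s) + (q₂ : ℤ) * ((m₂ : ℤ) * t) = 1 := by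
        have h₁ : ((q₁ : ℕ) : ℤ) * (m₁ : ℤ) = (L₁ : ℤ) := by exact_mod_cast congrArg (Nat.cast : ℕ → ℤ) hm₁
        have h₂ : ((q₂ : ℕ) : ℤ) * (m₂ : ℤ) = (L₂ : ℤ) := by exact_mod_cast congrArg (Nat.cast : ℕ → ℤ) hm₂
        linear_combination hst + s * h₁ + t * h₂
      rw [eFun_split q₁ q₂ hq₁ hq₂ ((m₁ : ℤ) * s) ((m₂ : ℤ) * t) hsplitq]
      rw [eFun_split L₁ L₂ hL₁pos hL₂pos s t hst]
      -- four congruences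
      have heval₁ : ((eval (fun i => (y i : ℤ)) F : ℤ) : ZMod q₁)
          = ((eval (fun i => ((y i % L₁ : ℕ) : ℤ)) F : ℤ) : ZMod q₁) := by
        apply eval_zmod
        intro i
        push_cast [natCast_mod_int]
        rw [cast_int_emod (a := L₁) (b := q₁) hq₁L ((y i : ℕ) : ℤ)]
        push_cast
        ring
      have heval₂ : ((eval (fun i => (y i : ℤ)) F : ℤ) : ZMod q₂)
          = ((eval (fun i => ((y i % L₂ : ℕ) : ℤ)) F : ℤ) : ZMod q₂) := by
        apply eval_zmod
        intro i
        push_cast [natCast_mod_int]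
        rw [cast_int_emod (a := L₂) (b := q₂) hq₂L ((y i : ℕ) : ℤ)]
        push_cast
        ring
      have c₁ : eFun q₁ ((m₂ : ℤ) * t * ((a : ℕ) * eval (fun i => (y i : ℤ)) F))
          = eFun q₁ ((a₁ : ℕ) * eval (fun i => ((y i % L₁ : ℕ) : ℤ)) F) := by
        apply eFun_congr
        push_cast
        push_cast at heval₁ ha₁c
        rw [← heval₁, ha₁c]
        ring
      have c₂ : eFun q₂ ((m₁ : ℤ) * s * ((a : ℕ) * eval (fun i => (y i : ℤ)) F))
          = eFun q₂ ((a₂ : ℕ) * eval (fun i => ((y i % L₂ : ℕ) : ℤ)) F) := by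
        apply eFun_congr
        push_cast
        push_cast at heval₂ ha₂c
        rw [← heval₂, ha₂c]
        ring
      have c₃ : eFun L₁ (t * ∑ i, c i * (y i : ℤ))
          = eFun L₁ (∑ i, (t * c i) * ((y i % L₁ : ℕ) : ℤ)) := by
        apply eFun_congr
        push_cast
        rw [Finset.mul_sum]
        apply Finset.sum_congr rfl
        intro i _
        push_cast
        ring
      have c₄ : eFun L₂ (s * ∑ i, c i * (y i : ℤ))
          = eFun L₂ (∑ i, (s * c i) * ((y i % L₂ : ℕ) : ℤ)) := by
        apply eFun_congr
        push_cast
        rw [Finset.mul_sum]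
        apply Finset.sum_congr rfl
        intro i _
        push_cast
        ring
      rw [c₁, c₂, c₃, c₄]
      ring
    · rw [if_neg hΩ]
      have : ¬ ((fun i => ((y i : ℤ) : ZMod M₁)) ∈ Ω₁ ∧ (fun i => ((y i : ℤ) : ZMod M₂)) ∈ Ω₂) := by
        intro hcontra
        exact hΩ (hCRT'.mpr hcontra)
      by_cases h1 : (fun i => ((y i : ℤ) : ZMod M₁)) ∈ Ω₁
      · have h2 : ¬ (fun i => ((y i : ℤ) : ZMod M₂)) ∈ Ω₂ := fun h => this ⟨h1, h⟩
        rw [if_neg h2, mul_zero]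
      · rw [if_neg h1, zero_mul]
end

section
/- Let c ∈ (0,1) and suppose ω_p ≥ 1 - c/p for all primes p. Then for every ε > 0, G(ξ) := Σ_{k < ξ} μ²(k) Π_{p|k} (ω_p/(1-ω_p)) ≫_ε ξ^{2-ε}. -/
open Finset
open scoped Classical

private lemma sum_inv_sq_aux : ∀ s : ℕ, 2 ≤ s →
    ∑ d ∈ Finset.Icc 2 s, (1:ℝ)/((d:ℝ)*(d:ℝ)) ≤ 3/4 - 1/(s:ℝ) := by
  intro s hs
  induction s, hs using Nat.le_induction with
  | base => rw [Finset.Icc_self, Finset.sum_singleton]; norm_num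
  | succ n hn ih =>
    rw [Finset.sum_Icc_succ_top (by omega)]
    have hn0 : (0:ℝ) < (n:ℝ) := by positivity
    have hn2 : (2:ℝ) ≤ (n:ℝ) := by exact_mod_cast hn
    have key : (1:ℝ)/(((n:ℝ)+1)*((n:ℝ)+1)) ≤ 1/(n:ℝ) - 1/((n:ℝ)+1) := by
      have h1 : (1:ℝ)/n - 1/(n+1) = 1/(n*(n+1)) := by field_simp; ring
      rw [h1]
      gcongr
      nlinarith
    push_cast at *
    nlinarith [key]

private lemma sum_inv_sq (s : ℕ) :
    ∑ d ∈ Finset.Icc 2 s, (1:ℝ)/((d:ℝ)*(d:ℝ)) ≤ 3/4 := by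
  rcases le_or_gt 2 s with h | h
  · have := sum_inv_sq_aux s h
    have h0 : (0:ℝ) < (s:ℝ) := by positivity
    have : (0:ℝ) ≤ 1/(s:ℝ) := by positivity
    linarith [sum_inv_sq_aux s h]
  · rw [Finset.Icc_eq_empty (by omega)]
    norm_num

/-- For every `ε > 0` there is `M ≥ 1` with `2^{ω(k)} ≤ M k^ε` for squarefree `k`. -/
private lemma card_primeFactors_bound (ε : ℝ) (hε : 0 < ε) :
    ∃ M : ℝ, 1 ≤ M ∧ ∀ k : ℕ, Squarefree k →
      (2:ℝ) ^ k.primeFactors.card ≤ M * (k:ℝ) ^ ε := by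
  set m : ℕ := ⌈(2:ℝ)^(1/ε)⌉₊ with hm
  have h2 : (2:ℝ) ≤ ((m:ℝ)+2) ^ ε := by
    have h1 : (2:ℝ)^(1/ε) ≤ (m:ℝ) := Nat.le_ceil _
    have hb : (0:ℝ) ≤ (2:ℝ)^(1/ε) := le_of_lt (Real.rpow_pos_of_pos two_pos _)
    calc (2:ℝ) = ((2:ℝ)^(1/ε)) ^ ε := by
          rw [← Real.rpow_mul (by norm_num), one_div_mul_cancel hε.ne', Real.rpow_one]
      _ ≤ ((m:ℝ)+2) ^ ε := Real.rpow_le_rpow hb (by linarith) hε.le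
  refine ⟨(2:ℝ)^m, one_le_pow₀ (by norm_num), fun k hk => ?_⟩
  have hk0 : k ≠ 0 := hk.ne_zero
  set S := k.primeFactors with hS
  set T := S.filter (fun p => m + 1 < p) with hT
  have hsub : S.filter (fun p => ¬ (m + 1 < p)) ⊆ Finset.Icc 2 (m+1) := by
    intro p hp
    rw [Finset.mem_filter] at hp
    have := (Nat.prime_of_mem_primeFactors hp.1).two_le
    rw [Finset.mem_Icc]; omega
  have hcardsplit : T.card + (S.filter (fun p => ¬ (m + 1 < p))).card = S.card := by
    rw [hT]
    simpa using Finset.card_filter_add_card_filter_not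
      (s := S) (p := fun p => m + 1 < p)
  have hSle : S.card ≤ T.card + m := by
    have h1 : (S.filter (fun p => ¬ (m + 1 < p))).card ≤ m := by
      have := Finset.card_le_card hsub
      rw [Nat.card_Icc] at this; omega
    omega
  have hprod : (m+2) ^ T.card ≤ k := by
    calc (m+2) ^ T.card = ∏ _p ∈ T, (m+2) := (Finset.prod_const _).symm
      _ ≤ ∏ p ∈ T, p := by
          apply Finset.prod_le_prod (fun _ _ => Nat.zero_le _)
          intro p hp
          rw [hT, Finset.mem_filter] at hp
          omega
      _ ≤ ∏ p ∈ S, p := by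
          apply Finset.prod_le_prod_of_subset_of_one_le' (Finset.filter_subset _ _)
          intro p hp _
          exact (Nat.prime_of_mem_primeFactors hp).one_lt.le
      _ = k := Nat.prod_primeFactors_of_squarefree hk
  have hkr : (((m+2) ^ T.card : ℕ) : ℝ) ≤ (k:ℝ) := by exact_mod_cast hprod
  have step1 : (2:ℝ) ^ T.card ≤ (k:ℝ) ^ ε := by
    calc (2:ℝ) ^ T.card ≤ (((m:ℝ)+2) ^ ε) ^ T.card :=
          pow_le_pow_left₀ (by norm_num) h2 _
      _ = (((m:ℝ)+2) ^ (T.card : ℕ)) ^ ε := by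
          rw [← Real.rpow_natCast (((m:ℝ)+2) ^ ε) T.card,
            ← Real.rpow_natCast ((m:ℝ)+2) T.card,
            ← Real.rpow_mul (by positivity), ← Real.rpow_mul (by positivity),
            mul_comm]
      _ ≤ (k:ℝ) ^ ε := by
          apply Real.rpow_le_rpow (by positivity) _ hε.le
          push_cast at hkr ⊢
          exact hkr
  calc (2:ℝ) ^ S.card ≤ (2:ℝ) ^ (T.card + m) :=
        pow_le_pow_right₀ (by norm_num) hSle
    _ = (2:ℝ)^m * (2:ℝ)^T.card := by rw [pow_add, mul_comm]
    _ ≤ (2:ℝ)^m * (k:ℝ)^ε := by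
        apply mul_le_mul_of_nonneg_left step1 (by positivity)

/-- Let `c ∈ (0,1)` and suppose `ω_p ∈ [0,1)` with `ω_p ≥ 1 - c/p` for all primes `p`.
Then for every `ε > 0`,
`G(ξ) := Σ_{k < ξ} μ²(k) Π_{p|k} (ω_p/(1-ω_p)) ≫_ε ξ^{2-ε}`. -/
theorem stmt_13 (c : ℝ) (hc0 : 0 < c) (hc1 : c < 1) (ω : ℕ → ℝ)
    (hω : ∀ p : ℕ, p.Prime → 0 ≤ ω p ∧ ω p < 1)
    (hlow : ∀ p : ℕ, p.Prime → 1 - c / p ≤ ω p) (ε : ℝ) (hε : 0 < ε) :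
    ∃ C : ℝ, 0 < C ∧ ∃ ξ₀ : ℕ, ∀ ξ : ℕ, ξ₀ ≤ ξ →
      C * (ξ : ℝ) ^ ((2 : ℝ) - ε)
        ≤ ∑ k ∈ (Finset.Ico 1 ξ).filter Squarefree,
            ∏ p ∈ k.primeFactors, ω p / (1 - ω p) := by
  -- replace ε by ε' = min ε (1/2)
  set ε' : ℝ := min ε (1/2) with hε'
  have hε'0 : 0 < ε' := lt_min hε (by norm_num)
  have hε'le : ε' ≤ ε := min_le_left _ _
  have hε'half : ε' ≤ 1/2 := min_le_right _ _
  obtain ⟨M, hM1, hMbound⟩ := card_primeFactors_bound ε' hε'0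
  have hM0 : 0 < M := lt_of_lt_of_le one_pos hM1
  refine ⟨1/(256*M), by positivity, 1024, fun ξ hξ => ?_⟩
  have hξ16 : (16:ℝ) ≤ (ξ:ℝ) := by exact_mod_cast (by omega : (16:ℕ) ≤ ξ)
  have hξpos : (0:ℝ) < (ξ:ℝ) := by linarith
  -- per-factor lower bound
  have hfac : ∀ p : ℕ, p.Prime → (p:ℝ)/2 ≤ ω p / (1 - ω p) := by
    intro p hp
    have hp2 : (2:ℝ) ≤ (p:ℝ) := by exact_mod_cast hp.two_le
    have hppos : (0:ℝ) < p := by linarith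
    have hcp : c/(p:ℝ) ≤ 1/2 := by
      rw [div_le_div_iff₀ hppos (by norm_num)]; linarith
    have hω1 : 1/2 ≤ ω p := le_trans (by linarith) (hlow p hp)
    have h1ω : 0 < 1 - ω p := by linarith [(hω p hp).2]
    have h1ω' : 1 - ω p ≤ c/(p:ℝ) := by linarith [hlow p hp]
    have hcppos : 0 < c/(p:ℝ) := by positivity
    calc (p:ℝ)/2 ≤ (p:ℝ)/(2*c) := by
          apply div_le_div_of_nonneg_left (by linarith) (by positivity) (by linarith)
      _ = (1/2)/(c/(p:ℝ)) := by field_simp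
      _ ≤ ω p / (1 - ω p) := div_le_div₀ (by linarith) hω1 h1ω h1ω'
  -- term nonnegativity
  have hterm0 : ∀ k : ℕ, 0 ≤ ∏ p ∈ k.primeFactors, ω p / (1 - ω p) := by
    intro k
    apply Finset.prod_nonneg
    intro p hp
    have hp' := Nat.prime_of_mem_primeFactors hp
    have := (hω p hp').1
    have h1ω : 0 < 1 - ω p := by linarith [(hω p hp').2]
    positivity
  -- per-term lower bound for squarefree k
  have hterm : ∀ k : ℕ, Squarefree k →
      (k:ℝ) ^ ((1:ℝ) - ε') / M ≤ ∏ p ∈ k.primeFactors, ω p / (1 - ω p) := by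
    intro k hk
    have hk0 : k ≠ 0 := hk.ne_zero
    have hkpos : (0:ℝ) < (k:ℝ) := by positivity
    have h1 : (k:ℝ) / (2:ℝ)^k.primeFactors.card
        ≤ ∏ p ∈ k.primeFactors, ω p / (1 - ω p) := by
      have := Finset.prod_le_prod (s := k.primeFactors)
        (f := fun p : ℕ => (p:ℝ)/2) (g := fun p : ℕ => ω p / (1 - ω p))
        (fun p _ => by positivity)
        (fun p hp => hfac p (Nat.prime_of_mem_primeFactors hp))
      calc (k:ℝ) / (2:ℝ)^k.primeFactors.card
          = ∏ p ∈ k.primeFactors, (p:ℝ)/2 := by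
            rw [Finset.prod_div_distrib, Finset.prod_const]
            congr 1
            rw [← Nat.cast_prod, Nat.prod_primeFactors_of_squarefree hk]
        _ ≤ _ := this
    refine le_trans ?_ h1
    have h2 : (2:ℝ)^k.primeFactors.card ≤ M * (k:ℝ)^ε' := hMbound k hk
    have h3 : (k:ℝ) / (M * (k:ℝ)^ε') ≤ (k:ℝ) / (2:ℝ)^k.primeFactors.card :=
      div_le_div_of_nonneg_left (by positivity) (by positivity) h2
    refine le_trans (le_of_eq ?_) h3
    rw [Real.rpow_sub hkpos, Real.rpow_one, div_div, mul_comm M]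
  -- counting squarefree numbers
  set S := (Finset.Ico 1 ξ).filter Squarefree with hSdef
  have hcount : ((ξ:ℝ) - 1)/4 ≤ (S.card : ℝ) := by
    set s := Nat.sqrt (ξ - 1) with hs
    have hsubset : (Finset.Ico 1 ξ).filter (fun n => ¬ Squarefree n) ⊆
        (Finset.Icc 2 s).biUnion (fun d => (Finset.Ioc 0 (ξ-1)).filter (fun n => d*d ∣ n)) := by
      intro n hn
      rw [Finset.mem_filter, Finset.mem_Ico] at hn
      obtain ⟨⟨hn1, hnξ⟩, hnsf⟩ := hn
      rw [Nat.squarefree_iff_prime_squarefree] at hnsf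
      push_neg at hnsf
      obtain ⟨p, hp, hpd⟩ := hnsf
      have hp' : p.Prime := hp
      have hple : p * p ≤ n := Nat.le_of_dvd (by omega) hpd
      have hpsqrt : p ≤ s := Nat.le_sqrt.mpr (by omega)
      rw [Finset.mem_biUnion]
      exact ⟨p, Finset.mem_Icc.mpr ⟨hp'.two_le, hpsqrt⟩,
        Finset.mem_filter.mpr ⟨Finset.mem_Ioc.mpr ⟨by omega, by omega⟩, hpd⟩⟩
    have hnonsf : (((Finset.Ico 1 ξ).filter (fun n => ¬ Squarefree n)).card : ℝ)
        ≤ 3/4 * ((ξ:ℝ) - 1) := by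
      calc (((Finset.Ico 1 ξ).filter (fun n => ¬ Squarefree n)).card : ℝ)
          ≤ (((Finset.Icc 2 s).biUnion
              (fun d => (Finset.Ioc 0 (ξ-1)).filter (fun n => d*d ∣ n))).card : ℝ) := by
            exact_mod_cast Finset.card_le_card hsubset
        _ ≤ ∑ d ∈ Finset.Icc 2 s,
              (((Finset.Ioc 0 (ξ-1)).filter (fun n => d*d ∣ n)).card : ℝ) := by
            exact_mod_cast Finset.card_biUnion_le
        _ = ∑ d ∈ Finset.Icc 2 s, (((ξ-1) / (d*d) : ℕ) : ℝ) := by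
            apply Finset.sum_congr rfl
            intro d _
            congr 1
            exact Nat.Ioc_filter_dvd_card_eq_div (ξ-1) (d*d)
        _ ≤ ∑ d ∈ Finset.Icc 2 s, ((ξ:ℝ) - 1) * (1/((d:ℝ)*(d:ℝ))) := by
            apply Finset.sum_le_sum
            intro d hd
            rw [Finset.mem_Icc] at hd
            have hd0 : (0:ℝ) < (d:ℝ) := by
              have : (2:ℝ) ≤ (d:ℝ) := by exact_mod_cast hd.1
              linarith
            have := Nat.cast_div_le (α := ℝ) (m := ξ - 1) (n := d*d)
            push_cast at this ⊢
            rw [mul_one_div]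
            convert this using 2
            have : (1:ℕ) ≤ ξ := by omega
            push_cast [Nat.cast_sub this]
            ring
        _ = ((ξ:ℝ) - 1) * ∑ d ∈ Finset.Icc 2 s, (1/((d:ℝ)*(d:ℝ))) := by
            rw [Finset.mul_sum]
        _ ≤ ((ξ:ℝ) - 1) * (3/4) := by
            apply mul_le_mul_of_nonneg_left (sum_inv_sq s) (by linarith)
        _ = 3/4 * ((ξ:ℝ) - 1) := by ring
    have hsplit := Finset.card_filter_add_card_filter_not
      (s := Finset.Ico 1 ξ) (p := Squarefree)
    have hIco : (Finset.Ico 1 ξ).card = ξ - 1 := by rw [Nat.card_Ico]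
    have hIcoR : (((Finset.Ico 1 ξ).card : ℕ) : ℝ) = (ξ:ℝ) - 1 := by
      rw [hIco]; push_cast [Nat.cast_sub (by omega : (1:ℕ) ≤ ξ)]; ring
    have : (S.card : ℝ) + (((Finset.Ico 1 ξ).filter (fun n => ¬ Squarefree n)).card : ℝ)
        = (ξ:ℝ) - 1 := by
      rw [← hIcoR]; exact_mod_cast hsplit
    linarith
  -- restrict to large k
  set t₀ := ξ / 8 with ht₀
  set Sb := S.filter (fun k => t₀ ≤ k) with hSb
  have hcardSb : (ξ:ℝ)/16 ≤ (Sb.card : ℝ) := by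
    have hsmall : S.filter (fun k => ¬ t₀ ≤ k) ⊆ Finset.range t₀ := by
      intro k hk
      rw [Finset.mem_filter] at hk
      rw [Finset.mem_range]; omega
    have h1 : (S.filter (fun k => ¬ t₀ ≤ k)).card ≤ t₀ := by
      have := Finset.card_le_card hsmall
      rwa [Finset.card_range] at this
    have hsplit : Sb.card + (S.filter (fun k => ¬ (t₀ ≤ k))).card = S.card := by
      rw [hSb]
      simpa using Finset.card_filter_add_card_filter_not
        (s := S) (p := fun k => t₀ ≤ k)
    have h2 : S.card ≤ Sb.card + t₀ := by omega
    have h3 : (S.card : ℝ) ≤ (Sb.card : ℝ) + (t₀ : ℝ) := by exact_mod_cast h2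
    have h4 : (t₀ : ℝ) ≤ (ξ:ℝ)/8 := by
      rw [ht₀]
      exact_mod_cast Nat.cast_div_le
    linarith
  -- lower bound for elements of Sb
  have hbig : ∀ k ∈ Sb, (ξ:ℝ)/16 ≤ (k:ℝ) := by
    intro k hk
    rw [hSb, Finset.mem_filter] at hk
    have h8 : 8 * t₀ + 7 ≥ ξ := by omega
    have : (ξ:ℝ) ≤ 8 * (t₀:ℝ) + 7 := by exact_mod_cast h8
    have hkt : (t₀:ℝ) ≤ (k:ℝ) := by exact_mod_cast hk.2
    linarith
  -- bound each term in Sb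
  set B : ℝ := (ξ:ℝ) ^ ((1:ℝ) - ε') / (16 * M) with hB
  have htermSb : ∀ k ∈ Sb, B ≤ ∏ p ∈ k.primeFactors, ω p / (1 - ω p) := by
    intro k hk
    have hksf : Squarefree k := by
      have := hk
      rw [hSb, Finset.mem_filter, hSdef, Finset.mem_filter] at this
      exact this.1.2
    refine le_trans ?_ (hterm k hksf)
    show (ξ:ℝ) ^ ((1:ℝ) - ε') / (16 * M) ≤ (k:ℝ) ^ ((1:ℝ) - ε') / M
    have hexp : (0:ℝ) ≤ 1 - ε' := by linarith
    have h16 : ((ξ:ℝ)/16) ^ ((1:ℝ) - ε') ≤ (k:ℝ) ^ ((1:ℝ) - ε') :=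
      Real.rpow_le_rpow (by positivity) (hbig k hk) hexp
    have hsplit : ((ξ:ℝ)/16) ^ ((1:ℝ) - ε')
        = (ξ:ℝ) ^ ((1:ℝ) - ε') / (16:ℝ) ^ ((1:ℝ) - ε') := by
      rw [Real.div_rpow hξpos.le (by norm_num : (0:ℝ) ≤ 16)]
    have h16le : (16:ℝ) ^ ((1:ℝ) - ε') ≤ 16 := by
      calc (16:ℝ) ^ ((1:ℝ) - ε') ≤ (16:ℝ) ^ (1:ℝ) :=
            Real.rpow_le_rpow_of_exponent_le (by norm_num) (by linarith)
        _ = 16 := Real.rpow_one _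
    have hd : (ξ:ℝ) ^ ((1:ℝ) - ε') / (16 * M) ≤ ((ξ:ℝ)/16) ^ ((1:ℝ) - ε') / M := by
      rw [hsplit, div_div]
      apply div_le_div_of_nonneg_left (by positivity) (by positivity)
      apply mul_le_mul_of_nonneg_right h16le (le_of_lt hM0)
    calc (ξ:ℝ) ^ ((1:ℝ) - ε') / (16 * M) ≤ ((ξ:ℝ)/16) ^ ((1:ℝ) - ε') / M := hd
      _ ≤ (k:ℝ) ^ ((1:ℝ) - ε') / M := by gcongr
  -- assemble
  have hsumSb : (Sb.card : ℝ) * B ≤ ∑ k ∈ Sb, ∏ p ∈ k.primeFactors, ω p / (1 - ω p) := by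
    have := Finset.card_nsmul_le_sum Sb _ B htermSb
    simpa [nsmul_eq_mul] using this
  have hsubS : Sb ⊆ S := Finset.filter_subset _ _
  have hsum : ∑ k ∈ Sb, ∏ p ∈ k.primeFactors, ω p / (1 - ω p)
      ≤ ∑ k ∈ S, ∏ p ∈ k.primeFactors, ω p / (1 - ω p) :=
    Finset.sum_le_sum_of_subset_of_nonneg hsubS (fun k _ _ => hterm0 k)
  have hBpos : 0 ≤ B := by rw [hB]; positivity
  have hfin : (ξ:ℝ)/16 * B ≤ (Sb.card : ℝ) * B :=
    mul_le_mul_of_nonneg_right hcardSb hBpos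
  have hprod : (ξ:ℝ)/16 * B = (ξ:ℝ) ^ ((2:ℝ) - ε') / (256 * M) := by
    have hxx : (ξ:ℝ) ^ ((2:ℝ) - ε') = (ξ:ℝ) * (ξ:ℝ) ^ ((1:ℝ) - ε') := by
      rw [show (2:ℝ) - ε' = 1 + (1 - ε') by ring, Real.rpow_add hξpos, Real.rpow_one]
    have hMne : M ≠ 0 := hM0.ne'
    rw [hB, hxx]
    field_simp
    ring
  have hmono : (ξ:ℝ) ^ ((2:ℝ) - ε) ≤ (ξ:ℝ) ^ ((2:ℝ) - ε') :=
    Real.rpow_le_rpow_of_exponent_le (by linarith) (by linarith)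
  calc 1/(256*M) * (ξ:ℝ) ^ ((2:ℝ) - ε)
      ≤ 1/(256*M) * (ξ:ℝ) ^ ((2:ℝ) - ε') := by
        apply mul_le_mul_of_nonneg_left hmono (by positivity)
    _ = (ξ:ℝ) ^ ((2:ℝ) - ε') / (256 * M) := by ring
    _ = (ξ:ℝ)/16 * B := hprod.symm
    _ ≤ (Sb.card : ℝ) * B := hfin
    _ ≤ ∑ k ∈ Sb, ∏ p ∈ k.primeFactors, ω p / (1 - ω p) := hsumSb
    _ ≤ ∑ k ∈ S, ∏ p ∈ k.primeFactors, ω p / (1 - ω p) := hsum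
end

section
/- Let a_n be a finite sequence of non-negative reals indexed by positive integers, P a squarefree positive integer, and suppose for every d | P: Σ_{d|n} a_n = g(d)·X + r_d, where g is multiplicative on divisors of P with 0 < g(p) < 1 for p | P, and |r_d| ≤ C·d^κ for constants C, κ > 0. Then (Selberg sieve) Σ_{gcd(n,P)=1} a_n ≤ X/G(ξ) + Σ_{d ≤ ξ²} τ₃(d)·C·d^κ, where G(ξ) = Σ_{k ≤ ξ, k|P} μ²(k) Π_{p|k} g(p)/(1-g(p)) and τ₃ is the 3-fold divisor function. -/
open Finset

private lemma sum_pm_one_powerset {α : Type*} [DecidableEq α] (x : Finset α) :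
    (∑ m ∈ x.powerset, (-1 : ℝ) ^ #m) = if x = ∅ then 1 else 0 := by
  have h := Finset.sum_powerset_neg_one_pow_card (x := x)
  have h2 : ((∑ m ∈ x.powerset, (-1 : ℤ) ^ #m : ℤ) : ℝ)
      = ((if x = ∅ then 1 else 0 : ℤ) : ℝ) := by rw [h]
  push_cast at h2
  simpa using h2

private lemma selberg_core (g : ℕ → ℝ) (Q : Finset ℕ)
    (hg : ∀ p ∈ Q, 0 < g p ∧ g p < 1)
    (D : Finset (Finset ℕ)) (hDQ : ∀ s ∈ D, s ⊆ Q)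
    (hdc : ∀ s ∈ D, ∀ t, t ⊆ s → t ∈ D) (hempty : ∅ ∈ D) :
    ∃ lam : Finset ℕ → ℝ,
      (∀ s, s ∉ D → lam s = 0) ∧ lam ∅ = 1 ∧ (∀ s, |lam s| ≤ 1) ∧
      (∑ s ∈ D, ∑ t ∈ D, lam s * lam t * ∏ p ∈ s ∪ t, g p)
        = (∑ s ∈ D, ∏ p ∈ s, g p / (1 - g p))⁻¹ := by
  classical
  set h : Finset ℕ → ℝ := fun s => ∏ p ∈ s, g p / (1 - g p) with hh
  have h1g : ∀ p ∈ Q, 0 < 1 - g p := fun p hp => by linarith [(hg p hp).2]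
  have hg0 : ∀ p ∈ Q, 0 < g p := fun p hp => (hg p hp).1
  have hpos : ∀ s : Finset ℕ, s ⊆ Q → 0 < h s := by
    intro s hs
    exact Finset.prod_pos fun p hp => div_pos (hg0 p (hs hp)) (h1g p (hs hp))
  set G : ℝ := ∑ s ∈ D, h s with hG
  have hGpos : 0 < G :=
    Finset.sum_pos' (fun s hs => (hpos s (hDQ s hs)).le) ⟨∅, hempty, hpos ∅ (by simp)⟩
  set lam : Finset ℕ → ℝ := fun s =>
    (-1 : ℝ) ^ #s * (∏ p ∈ s, (1 - g p)⁻¹) *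
      ((∑ t ∈ D.filter (fun t => s ⊆ t), h (t \ s)) / G) with hlam
  have hsupp : ∀ s, s ∉ D → lam s = 0 := by
    intro s hs
    have : D.filter (fun t => s ⊆ t) = ∅ :=
      Finset.filter_eq_empty_iff.mpr fun t ht hst => hs (hdc t ht s hst)
    simp [hlam, this]
  have hlam1 : lam ∅ = 1 := by
    have h1 : D.filter (fun t => (∅ : Finset ℕ) ⊆ t) = D :=
      Finset.filter_true_of_mem fun t _ => Finset.empty_subset t
    simp [hlam, h1, div_self hGpos.ne']
    exact div_self hGpos.ne'
  -- key bound for |lam| ≤ 1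
  have hkey : ∀ s ∈ D, (∏ p ∈ s, (1 - g p)⁻¹) *
      (∑ t ∈ D.filter (fun t => s ⊆ t), h (t \ s)) ≤ G := by
    intro s hs
    have hsQ := hDQ s hs
    have e1 : (∏ p ∈ s, (1 - g p)⁻¹) = ∑ e ∈ s.powerset, h e := by
      have e0 : ∀ p ∈ s, (1 - g p)⁻¹ = g p / (1 - g p) + 1 := by
        intro p hp
        field_simp [(h1g p (hsQ hp)).ne']
        ring
      rw [Finset.prod_congr rfl e0, Finset.prod_add]
      simp [hh]
    rw [e1, Finset.sum_mul_sum]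
    have e2 : ∀ e ∈ s.powerset, ∀ t ∈ D.filter (fun t => s ⊆ t),
        h e * h (t \ s) = h (e ∪ (t \ s)) := by
      intro e he t _
      have hd : Disjoint e (t \ s) :=
        Finset.disjoint_sdiff.mono_left (Finset.mem_powerset.mp he)
      rw [hh]
      exact (Finset.prod_union hd).symm
    rw [Finset.sum_congr rfl fun e he => Finset.sum_congr rfl fun t ht => e2 e he t ht]
    rw [← Finset.sum_product']
    have hinj : ∀ x ∈ s.powerset ×ˢ D.filter (fun t => s ⊆ t),
        ∀ y ∈ s.powerset ×ˢ D.filter (fun t => s ⊆ t),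
        x.1 ∪ (x.2 \ s) = y.1 ∪ (y.2 \ s) → x = y := by
      rintro ⟨e, t⟩ hx ⟨e', t'⟩ hy hxy
      simp only [Finset.mem_product, Finset.mem_powerset, Finset.mem_filter] at hx hy
      have he : e ⊆ s := hx.1
      have he' : e' ⊆ s := hy.1
      have hst : s ⊆ t := hx.2.2
      have hst' : s ⊆ t' := hy.2.2
      have h1 : e = e' := by
        have := congrArg (fun u => u ∩ s) hxy
        simpa [Finset.union_inter_distrib_right, Finset.inter_eq_left.mpr he,
          Finset.inter_eq_left.mpr he', Finset.sdiff_inter_self] using this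
      have h2 : t = t' := by
        dsimp only at hxy
        ext x
        by_cases hxs : x ∈ s
        · simp only [hst hxs, hst' hxs]
        · constructor
          · intro hxt
            have hx1 : x ∈ e ∪ t \ s := Finset.mem_union_right _ (Finset.mem_sdiff.mpr ⟨hxt, hxs⟩)
            rw [hxy] at hx1
            rcases Finset.mem_union.mp hx1 with hx2 | hx2
            · exact absurd (he' hx2) hxs
            · exact (Finset.mem_sdiff.mp hx2).1
          · intro hxt
            have hx1 : x ∈ e' ∪ t' \ s := Finset.mem_union_right _ (Finset.mem_sdiff.mpr ⟨hxt, hxs⟩)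
            rw [← hxy] at hx1
            rcases Finset.mem_union.mp hx1 with hx2 | hx2
            · exact absurd (he hx2) hxs
            · exact (Finset.mem_sdiff.mp hx2).1
      rw [Prod.mk.injEq]
      exact ⟨h1, h2⟩
    calc (∑ x ∈ s.powerset ×ˢ D.filter (fun t => s ⊆ t), h (x.1 ∪ (x.2 \ s)))
        = ∑ u ∈ (s.powerset ×ˢ D.filter (fun t => s ⊆ t)).image
            (fun x => x.1 ∪ (x.2 \ s)), h u := (Finset.sum_image hinj).symm
      _ ≤ G := by
          apply Finset.sum_le_sum_of_subset_of_nonneg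
          · intro u hu
            simp only [Finset.mem_image] at hu
            obtain ⟨⟨e, t⟩, hx, rfl⟩ := hu
            simp only [Finset.mem_product, Finset.mem_powerset, Finset.mem_filter] at hx
            exact hdc t hx.2.1 _ (Finset.union_subset (hx.1.trans hx.2.2)
              (Finset.sdiff_subset))
          · intro u hu _
            exact (hpos u (hDQ u hu)).le
  have habs : ∀ s, |lam s| ≤ 1 := by
    intro s
    by_cases hs : s ∈ D
    · have hsQ := hDQ s hs
      have hp1 : 0 ≤ ∏ p ∈ s, (1 - g p)⁻¹ :=
        Finset.prod_nonneg fun p hp => (inv_pos.mpr (h1g p (hsQ hp))).le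
      have hp2 : 0 ≤ ∑ t ∈ D.filter (fun t => s ⊆ t), h (t \ s) :=
        Finset.sum_nonneg fun t ht => by
          refine (hpos _ ?_).le
          exact (Finset.sdiff_subset).trans (hDQ t (Finset.mem_filter.mp ht).1)
      rw [hlam]
      rw [abs_mul, abs_mul, abs_pow, abs_neg, abs_one, one_pow, one_mul,
        abs_of_nonneg hp1, abs_of_nonneg (div_nonneg hp2 hGpos.le)]
      rw [mul_div_assoc']
      rw [div_le_one hGpos]
      exact hkey s hs
    · rw [hsupp s hs]
      simp
  -- the forward (Möbius-inverted) transform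
  have hy : ∀ k : Finset ℕ, k ⊆ Q →
      (∑ d ∈ D.filter (fun d => k ⊆ d), (∏ p ∈ d, g p) * lam d)
        = if k ∈ D then (-1:ℝ)^#k * h k / G else 0 := by
    intro k hkQ
    have step1 : ∀ d ∈ D, (∏ p ∈ d, g p) * lam d
        = (∑ t ∈ D.filter (fun t => d ⊆ t), (-1:ℝ)^#d * h t) / G := by
      intro d hd
      have e0 : (∏ p ∈ d, g p) * (∏ p ∈ d, (1 - g p)⁻¹) = h d := by
        rw [hh, ← Finset.prod_mul_distrib]
        exact Finset.prod_congr rfl fun p hp => (div_eq_mul_inv _ _).symm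
      have e1 : h d * (∑ t ∈ D.filter (fun t => d ⊆ t), h (t \ d))
          = ∑ t ∈ D.filter (fun t => d ⊆ t), h t := by
        rw [Finset.mul_sum]
        refine Finset.sum_congr rfl fun t ht => ?_
        have hdt : d ⊆ t := (Finset.mem_filter.mp ht).2
        rw [hh, mul_comm]
        exact Finset.prod_sdiff hdt
      calc (∏ p ∈ d, g p) * lam d
          = (-1:ℝ)^#d * ((h d * ∑ t ∈ D.filter (fun t => d ⊆ t), h (t \ d)) / G) := by
            rw [hlam, ← e0]; ring
        _ = (∑ t ∈ D.filter (fun t => d ⊆ t), (-1:ℝ)^#d * h t) / G := by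
            rw [e1, ← mul_div_assoc, Finset.mul_sum]
    have claim : ∀ t ∈ D, (∑ d ∈ D, (if k ⊆ d ∧ d ⊆ t then ((-1:ℝ)^#d) else 0))
        = if t = k then (-1:ℝ)^#k else 0 := by
      intro t ht
      rw [← Finset.sum_filter]
      by_cases hkt : k ⊆ t
      · have hfe : D.filter (fun d => k ⊆ d ∧ d ⊆ t)
            = (t \ k).powerset.image (fun m => k ∪ m) := by
          ext d
          simp only [Finset.mem_filter, Finset.mem_image, Finset.mem_powerset]
          constructor
          · rintro ⟨hdD, hkd, hdt⟩
            exact ⟨d \ k, Finset.sdiff_subset_sdiff hdt (le_refl k),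
              Finset.union_sdiff_of_subset hkd⟩
          · rintro ⟨m, hm, rfl⟩
            have hmt : m ⊆ t := hm.trans Finset.sdiff_subset
            exact ⟨hdc t ht _ (Finset.union_subset hkt hmt), Finset.subset_union_left,
              Finset.union_subset hkt hmt⟩
        have hinj2 : ∀ m ∈ (t \ k).powerset, ∀ m' ∈ (t \ k).powerset,
            k ∪ m = k ∪ m' → m = m' := by
          intro m hm m' hm' hmm
          have d1 : Disjoint k m := (Finset.disjoint_sdiff.mono_right
            (Finset.mem_powerset.mp hm)).symm.symm
          have d1 : Disjoint k m := Finset.disjoint_of_subset_right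
            (Finset.mem_powerset.mp hm) Finset.disjoint_sdiff
          have d2 : Disjoint k m' := Finset.disjoint_of_subset_right
            (Finset.mem_powerset.mp hm') Finset.disjoint_sdiff
          rw [← Finset.union_sdiff_cancel_left d1, hmm, Finset.union_sdiff_cancel_left d2]
        rw [hfe, Finset.sum_image hinj2]
        have e2 : ∀ m ∈ (t \ k).powerset, (-1:ℝ)^#(k ∪ m) = (-1:ℝ)^#k * (-1:ℝ)^#m := by
          intro m hm
          have d1 : Disjoint k m := Finset.disjoint_of_subset_right
            (Finset.mem_powerset.mp hm) Finset.disjoint_sdiff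
          rw [Finset.card_union_of_disjoint d1, pow_add]
        rw [Finset.sum_congr rfl e2, ← Finset.mul_sum, sum_pm_one_powerset]
        by_cases htk : t = k
        · simp [htk]
        · have : ¬ (t \ k = ∅) := by
            rw [Finset.sdiff_eq_empty_iff_subset]
            exact fun hsub => htk (Finset.Subset.antisymm hsub hkt)
          simp [htk, this]
      · have hfe : D.filter (fun d => k ⊆ d ∧ d ⊆ t) = ∅ :=
          Finset.filter_eq_empty_iff.mpr fun d _ hd => hkt (hd.1.trans hd.2)
        have htk : ¬ (t = k) := fun htk => hkt (htk ▸ le_refl t)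
        simp [hfe, htk]
    calc ∑ d ∈ D.filter (fun d => k ⊆ d), (∏ p ∈ d, g p) * lam d
        = ∑ d ∈ D.filter (fun d => k ⊆ d),
            (∑ t ∈ D.filter (fun t => d ⊆ t), (-1:ℝ)^#d * h t) / G := by
          refine Finset.sum_congr rfl fun d hd => step1 d (Finset.mem_filter.mp hd).1
      _ = (∑ d ∈ D, ∑ t ∈ D, if k ⊆ d ∧ d ⊆ t then (-1:ℝ)^#d * h t else 0) / G := by
          rw [← Finset.sum_div]
          congr 1
          rw [Finset.sum_filter]
          refine Finset.sum_congr rfl fun d _ => ?_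
          by_cases hkd : k ⊆ d
          · simp only [hkd, if_true, true_and, Finset.sum_filter]
          · simp [hkd]
      _ = (∑ t ∈ D, ∑ d ∈ D, if k ⊆ d ∧ d ⊆ t then (-1:ℝ)^#d * h t else 0) / G := by
          rw [Finset.sum_comm]
      _ = (∑ t ∈ D, if t = k then (-1:ℝ)^#k * h t else 0) / G := by
          congr 1
          refine Finset.sum_congr rfl fun t ht => ?_
          have e3 : ∀ d, (if k ⊆ d ∧ d ⊆ t then (-1:ℝ)^#d * h t else 0)
              = (if k ⊆ d ∧ d ⊆ t then (-1:ℝ)^#d else 0) * h t := by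
            intro d; split_ifs <;> simp
          rw [Finset.sum_congr rfl fun d _ => e3 d, ← Finset.sum_mul, claim t ht]
          split_ifs <;> simp
      _ = if k ∈ D then (-1:ℝ)^#k * h k / G else 0 := by
          rw [Finset.sum_ite_eq' D k (fun t => (-1:ℝ)^#k * h t)]
          split_ifs <;> simp
  -- the quadratic form identity
  have hQF : (∑ s ∈ D, ∑ t ∈ D, lam s * lam t * ∏ p ∈ s ∪ t, g p) = G⁻¹ := by
    set h' : Finset ℕ → ℝ := fun k => ∏ p ∈ k, (1 - g p) / g p with hh'
    have stepA : ∀ s ∈ D, ∀ t ∈ D, lam s * lam t * ∏ p ∈ s ∪ t, g p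
        = ∑ k ∈ Q.powerset,
            (if k ⊆ s then (∏ p ∈ s, g p) * lam s else 0) *
            ((if k ⊆ t then (∏ p ∈ t, g p) * lam t else 0) * h' k) := by
      intro s hs t ht
      have hsQ := hDQ s hs
      have htQ := hDQ t ht
      have hne : (∏ p ∈ s ∩ t, g p) ≠ 0 :=
        (Finset.prod_pos fun p hp =>
          hg0 p (hsQ (Finset.mem_of_mem_inter_left hp))).ne'
      have e1 : (∏ p ∈ s ∪ t, g p)
          = (∏ p ∈ s, g p) * (∏ p ∈ t, g p) * (∏ p ∈ s ∩ t, g p)⁻¹ := by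
        rw [eq_mul_inv_iff_mul_eq₀ hne]
        exact Finset.prod_union_inter
      have e2 : (∏ p ∈ s ∩ t, g p)⁻¹ = ∑ k ∈ (s ∩ t).powerset, h' k := by
        rw [← Finset.prod_inv_distrib]
        have e2' : ∀ p ∈ s ∩ t, (g p)⁻¹ = (1 - g p) / g p + 1 := by
          intro p hp
          have := hg0 p (hsQ (Finset.mem_of_mem_inter_left hp))
          field_simp
          ring
        rw [Finset.prod_congr rfl e2', Finset.prod_add]
        simp [hh']
      have e3 : ∑ k ∈ (s ∩ t).powerset, h' k
          = ∑ k ∈ Q.powerset, if k ⊆ s ∩ t then h' k else 0 := by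
        rw [← Finset.sum_filter]
        congr 1
        ext k
        simp only [Finset.mem_filter, Finset.mem_powerset]
        constructor
        · intro hk
          exact ⟨hk.trans ((Finset.inter_subset_left).trans hsQ), hk⟩
        · exact fun hk => hk.2
      rw [e1, e2, e3, Finset.mul_sum, Finset.mul_sum]
      refine Finset.sum_congr rfl fun k hk => ?_
      by_cases h1 : k ⊆ s ∩ t
      · rw [if_pos h1, if_pos ((Finset.subset_inter_iff.mp h1).1),
          if_pos ((Finset.subset_inter_iff.mp h1).2)]
        ring
      · rw [if_neg h1]
        rcases (not_and_or.mp (fun hc => h1 (Finset.subset_inter_iff.mpr hc)) :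
            ¬ k ⊆ s ∨ ¬ k ⊆ t) with h2 | h2
        · rw [if_neg h2]; ring
        · rw [if_neg h2]; ring
    calc (∑ s ∈ D, ∑ t ∈ D, lam s * lam t * ∏ p ∈ s ∪ t, g p)
        = ∑ s ∈ D, ∑ t ∈ D, ∑ k ∈ Q.powerset,
            (if k ⊆ s then (∏ p ∈ s, g p) * lam s else 0) *
            ((if k ⊆ t then (∏ p ∈ t, g p) * lam t else 0) * h' k) := by
          exact Finset.sum_congr rfl fun s hs =>
            Finset.sum_congr rfl fun t ht => stepA s hs t ht
      _ = ∑ k ∈ Q.powerset, ∑ s ∈ D, ∑ t ∈ D,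
            (if k ⊆ s then (∏ p ∈ s, g p) * lam s else 0) *
            ((if k ⊆ t then (∏ p ∈ t, g p) * lam t else 0) * h' k) := by
          refine Eq.trans (Finset.sum_congr rfl fun s _ => Finset.sum_comm) ?_
          exact Finset.sum_comm
      _ = ∑ k ∈ Q.powerset,
            (∑ s ∈ D, if k ⊆ s then (∏ p ∈ s, g p) * lam s else 0) *
            ((∑ t ∈ D, if k ⊆ t then (∏ p ∈ t, g p) * lam t else 0) * h' k) := by
          refine Finset.sum_congr rfl fun k _ => ?_
          symm
          rw [Finset.sum_mul]
          refine Finset.sum_congr rfl fun s _ => ?_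
          rw [Finset.sum_mul, Finset.mul_sum]
      _ = ∑ k ∈ Q.powerset,
            (if k ∈ D then (-1:ℝ)^#k * h k / G else 0) *
            ((if k ∈ D then (-1:ℝ)^#k * h k / G else 0) * h' k) := by
          refine Finset.sum_congr rfl fun k hk => ?_
          rw [← Finset.sum_filter, hy k (Finset.mem_powerset.mp hk)]
      _ = ∑ k ∈ Q.powerset, if k ∈ D then h k / G ^ 2 else 0 := by
          refine Finset.sum_congr rfl fun k hk => ?_
          by_cases hkD : k ∈ D
          · rw [if_pos hkD, if_pos hkD]
            have hkQ' : k ⊆ Q := hDQ k hkD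
            have h1 : h' k * h k = 1 := by
              rw [hh', hh, ← Finset.prod_mul_distrib]
              refine Finset.prod_eq_one fun p hp => ?_
              have := hg0 p (hkQ' hp)
              have := h1g p (hkQ' hp)
              field_simp
            have hsq : ((-1:ℝ)^#k)^2 = 1 := by
              rw [← pow_mul, mul_comm, pow_mul]
              norm_num
            calc ((-1:ℝ)^#k * h k / G) * (((-1:ℝ)^#k * h k / G) * h' k)
                = (((-1:ℝ)^#k)^2) * (h' k * h k) * h k / G^2 := by ring
              _ = h k / G^2 := by rw [hsq, h1]; ring
          · simp [hkD]
      _ = ∑ k ∈ D, h k / G ^ 2 := by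
          rw [← Finset.sum_filter]
          congr 1
          ext k
          simp only [Finset.mem_filter, Finset.mem_powerset]
          exact ⟨fun hk => hk.2, fun hk => ⟨hDQ k hk, hk⟩⟩
      _ = G⁻¹ := by
          rw [← Finset.sum_div, ← hG, sq, ← div_div, div_self hGpos.ne', one_div]
  exact ⟨lam, hsupp, hlam1, habs, hQF⟩

private lemma coprime_prod_prod {s t : Finset ℕ} (hs : ∀ p ∈ s, p.Prime)
    (ht : ∀ p ∈ t, p.Prime) (hd : Disjoint s t) :
    Nat.Coprime (∏ p ∈ s, p) (∏ p ∈ t, p) := by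
  apply Nat.Coprime.prod_left
  intro p hp
  apply Nat.Coprime.prod_right
  intro q hq
  exact (Nat.coprime_primes (hs p hp) (ht q hq)).mpr
    (fun h => (Finset.disjoint_left.mp hd hp) (h ▸ hq))

private lemma g_prod_aux (g : ℕ → ℝ) (P : ℕ) (hPsq : Squarefree P) (hg1 : g 1 = 1)
    (hgmul : ∀ d e : ℕ, d ∣ P → e ∣ P → Nat.Coprime d e → g (d * e) = g d * g e) :
    ∀ s : Finset ℕ, s ⊆ P.primeFactors → g (∏ p ∈ s, p) = ∏ p ∈ s, g p := by
  intro s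
  induction s using Finset.cons_induction with
  | empty => intro _; simpa using hg1
  | cons p s hps ih =>
    intro hsub
    have hsubs : s ⊆ P.primeFactors := (Finset.subset_cons _).trans hsub
    have hpP : p ∈ P.primeFactors := hsub (Finset.mem_cons_self p s)
    have hp : p.Prime := Nat.prime_of_mem_primeFactors hpP
    have hprime : ∀ q ∈ s, q.Prime := fun q hq => Nat.prime_of_mem_primeFactors (hsubs hq)
    have hcop : Nat.Coprime p (∏ q ∈ s, q) := by
      apply Nat.Coprime.prod_right
      intro q hq
      exact (Nat.coprime_primes hp (hprime q hq)).mpr (fun h => hps (h ▸ hq))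
    have hdvd1 : p ∣ P := Nat.dvd_of_mem_primeFactors hpP
    have hdvd2 : (∏ q ∈ s, q) ∣ P := by
      calc (∏ q ∈ s, q) ∣ ∏ q ∈ P.primeFactors, q :=
            Finset.prod_dvd_prod_of_subset _ _ _ hsubs
        _ = P := Nat.prod_primeFactors_of_squarefree hPsq
    rw [Finset.prod_cons, hgmul p _ hdvd1 hdvd2 hcop, ih hsubs, Finset.prod_cons]

set_option maxHeartbeats 1000000 in

/-- The Selberg upper bound sieve: if `a_n ≥ 0` is supported on `1 ≤ n ≤ N`, `P` is a
squarefree sieving modulus, and for every `d | P` one has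
`Σ_{d|n} a_n = g(d)·X + r_d` with `g` multiplicative on divisors of `P`,
`0 < g(p) < 1` for `p | P`, and `|r_d| ≤ C·d^κ`, then
`Σ_{gcd(n,P)=1} a_n ≤ X/G(ξ) + Σ_{d ≤ ξ²} τ₃(d)·C·d^κ` where
`G(ξ) = Σ_{k ≤ ξ, k | P} μ²(k) Π_{p|k} g(p)/(1-g(p))` and `τ₃(d) = Σ_{e|d} τ(e)`. -/
theorem stmt_18 (N : ℕ) (a : ℕ → ℝ) (ha : ∀ n, 0 ≤ a n)
    (P : ℕ) (hP : 0 < P) (hPsq : Squarefree P)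
    (g : ℕ → ℝ) (hg1 : g 1 = 1)
    (hgmul : ∀ d e : ℕ, d ∣ P → e ∣ P → Nat.Coprime d e → g (d * e) = g d * g e)
    (hgp : ∀ q : ℕ, q.Prime → q ∣ P → 0 < g q ∧ g q < 1)
    (X C κ : ℝ) (hC : 0 < C) (hκ : 0 < κ)
    (r : ℕ → ℝ)
    (hr : ∀ d : ℕ, d ∣ P →
      (∑ n ∈ Finset.Icc 1 N, if d ∣ n then a n else 0) = g d * X + r d)
    (hrbound : ∀ d : ℕ, d ∣ P → |r d| ≤ C * (d : ℝ) ^ κ)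
    (ξ : ℝ) (hξ : 1 ≤ ξ) :
    (∑ n ∈ Finset.Icc 1 N, if Nat.Coprime n P then a n else 0)
      ≤ X / (∑ k ∈ P.divisors.filter (fun k : ℕ => (k : ℝ) ≤ ξ),
              ∏ q ∈ k.primeFactors, g q / (1 - g q))
        + ∑ d ∈ Finset.Icc 1 ⌊ξ ^ 2⌋₊,
            (∑ e ∈ d.divisors, (e.divisors.card : ℝ)) * C * (d : ℝ) ^ κ := by
  classical
  have hPne : P ≠ 0 := hP.ne'
  set Qs := P.primeFactors with hQs
  have hQprime : ∀ p ∈ Qs, p.Prime := fun p hp => Nat.prime_of_mem_primeFactors hp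
  have hgQ : ∀ p ∈ Qs, 0 < g p ∧ g p < 1 := fun p hp =>
    hgp p (hQprime p hp) (Nat.dvd_of_mem_primeFactors hp)
  set D : Finset (Finset ℕ) :=
    Qs.powerset.filter (fun s => ((∏ p ∈ s, p : ℕ) : ℝ) ≤ ξ) with hD
  have hDQ : ∀ s ∈ D, s ⊆ Qs := fun s hs =>
    Finset.mem_powerset.mp (Finset.mem_filter.mp hs).1
  have hπpos : ∀ s : Finset ℕ, s ⊆ Qs → 0 < ∏ p ∈ s, p := fun s hs =>
    Finset.prod_pos (fun p hp => (hQprime p (hs hp)).pos)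
  have hdc : ∀ s ∈ D, ∀ t, t ⊆ s → t ∈ D := by
    intro s hs t hts
    obtain ⟨hs1, hs2⟩ := Finset.mem_filter.mp hs
    have hsQ := Finset.mem_powerset.mp hs1
    refine Finset.mem_filter.mpr ⟨Finset.mem_powerset.mpr (hts.trans hsQ), ?_⟩
    have h1 : (∏ p ∈ t, p) ≤ ∏ p ∈ s, p :=
      Nat.le_of_dvd (hπpos s hsQ) (Finset.prod_dvd_prod_of_subset _ _ _ hts)
    calc ((∏ p ∈ t, p : ℕ) : ℝ) ≤ ((∏ p ∈ s, p : ℕ) : ℝ) := Nat.cast_le.mpr h1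
      _ ≤ ξ := hs2
  have hempty : ∅ ∈ D := by
    refine Finset.mem_filter.mpr ⟨Finset.mem_powerset.mpr (Finset.empty_subset _), ?_⟩
    simpa using hξ
  obtain ⟨lam, hsupp, hlam1, habs, hQF⟩ := selberg_core g Qs hgQ D hDQ hdc hempty
  have hπP : ∀ s : Finset ℕ, s ⊆ Qs → (∏ p ∈ s, p) ∣ P := by
    intro s hs
    calc (∏ p ∈ s, p) ∣ ∏ p ∈ Qs, p := Finset.prod_dvd_prod_of_subset _ _ _ hs
      _ = P := Nat.prod_primeFactors_of_squarefree hPsq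
  have hgprod := g_prod_aux g P hPsq hg1 hgmul
  have hlcm : ∀ s t : Finset ℕ, s ⊆ Qs → t ⊆ Qs → ∀ n : ℕ,
      ((∏ p ∈ s ∪ t, p) ∣ n ↔ (∏ p ∈ s, p) ∣ n ∧ (∏ p ∈ t, p) ∣ n) := by
    intro s t hsQ htQ n
    constructor
    · intro hn
      exact ⟨dvd_trans (Finset.prod_dvd_prod_of_subset _ _ _ Finset.subset_union_left) hn,
        dvd_trans (Finset.prod_dvd_prod_of_subset _ _ _ Finset.subset_union_right) hn⟩
    · rintro ⟨h1, h2⟩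
      have he : s ∪ t = s ∪ (t \ s) := (Finset.union_sdiff_self_eq_union).symm
      rw [he, Finset.prod_union Finset.disjoint_sdiff]
      have hcop : Nat.Coprime (∏ p ∈ s, p) (∏ p ∈ t \ s, p) :=
        coprime_prod_prod (fun p hp => hQprime p (hsQ hp))
          (fun p hp => hQprime p (htQ (Finset.sdiff_subset hp))) Finset.disjoint_sdiff
      exact hcop.mul_dvd_of_dvd_of_dvd h1
        (dvd_trans (Finset.prod_dvd_prod_of_subset _ _ _ Finset.sdiff_subset) h2)
  have step1 : (∑ n ∈ Finset.Icc 1 N, if Nat.Coprime n P then a n else 0)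
      ≤ ∑ n ∈ Finset.Icc 1 N,
          a n * (∑ s ∈ D, if (∏ p ∈ s, p) ∣ n then lam s else 0)^2 := by
    refine Finset.sum_le_sum fun n hn => ?_
    by_cases hcp : Nat.Coprime n P
    · rw [if_pos hcp]
      have e1 : ∀ s ∈ D, (if (∏ p ∈ s, p) ∣ n then lam s else 0)
          = if s = ∅ then lam s else 0 := by
        intro s hs
        by_cases hse : s = ∅
        · subst hse; simp
        · rw [if_neg hse]
          have hnd : ¬ ((∏ p ∈ s, p) ∣ n) := by
            intro hdvd
            have h1 : (∏ p ∈ s, p) ∣ Nat.gcd n P := Nat.dvd_gcd hdvd (hπP s (hDQ s hs))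
            rw [Nat.Coprime.gcd_eq_one hcp] at h1
            obtain ⟨p, hp⟩ := Finset.nonempty_iff_ne_empty.mpr hse
            have h3 := (Finset.dvd_prod_of_mem (fun p => p) hp).trans h1
            exact (hQprime p (hDQ s hs hp)).one_lt.ne' (Nat.dvd_one.mp h3)
          rw [if_neg hnd]
      rw [Finset.sum_congr rfl e1, Finset.sum_ite_eq' D ∅ lam, if_pos hempty, hlam1]
      norm_num
    · rw [if_neg hcp]
      have := ha n
      positivity
  set R : ℝ := ∑ s ∈ D, ∑ t ∈ D, lam s * lam t * r (∏ p ∈ s ∪ t, p) with hR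
  have step2 : (∑ n ∈ Finset.Icc 1 N,
        a n * (∑ s ∈ D, if (∏ p ∈ s, p) ∣ n then lam s else 0)^2)
      = X * (∑ s ∈ D, ∑ t ∈ D, lam s * lam t * ∏ p ∈ s ∪ t, g p) + R := by
    have e1 : ∀ n, a n * (∑ s ∈ D, if (∏ p ∈ s, p) ∣ n then lam s else 0)^2
        = ∑ s ∈ D, ∑ t ∈ D,
            lam s * lam t * (if (∏ p ∈ s ∪ t, p) ∣ n then a n else 0) := by
      intro n
      rw [sq, Finset.sum_mul_sum, Finset.mul_sum]
      refine Finset.sum_congr rfl fun s hs => ?_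
      rw [Finset.mul_sum]
      refine Finset.sum_congr rfl fun t ht => ?_
      have hl := hlcm s t (hDQ s hs) (hDQ t ht) n
      by_cases h1 : (∏ p ∈ s, p) ∣ n <;> by_cases h2 : (∏ p ∈ t, p) ∣ n
      · rw [if_pos h1, if_pos h2, if_pos (hl.mpr ⟨h1, h2⟩)]; ring
      · rw [if_pos h1, if_neg h2, if_neg (fun hc => h2 (hl.mp hc).2)]; ring
      · rw [if_neg h1, if_pos h2, if_neg (fun hc => h1 (hl.mp hc).1)]; ring
      · rw [if_neg h1, if_neg h2, if_neg (fun hc => h1 (hl.mp hc).1)]; ring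
    rw [Finset.sum_congr rfl fun n _ => e1 n]
    rw [Finset.sum_comm]
    rw [Finset.sum_congr rfl fun s (_ : s ∈ D) => Finset.sum_comm]
    rw [hR, Finset.mul_sum, ← Finset.sum_add_distrib]
    refine Finset.sum_congr rfl fun s hs => ?_
    rw [Finset.mul_sum, ← Finset.sum_add_distrib]
    refine Finset.sum_congr rfl fun t ht => ?_
    have hsub : s ∪ t ⊆ Qs := Finset.union_subset (hDQ s hs) (hDQ t ht)
    rw [← Finset.mul_sum, hr _ (hπP _ hsub), hgprod _ hsub]
    ring
  have hGmatch : (∑ k ∈ P.divisors.filter (fun k : ℕ => (k : ℝ) ≤ ξ),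
        ∏ q ∈ k.primeFactors, g q / (1 - g q))
      = ∑ s ∈ D, ∏ p ∈ s, g p / (1 - g p) := by
    refine Finset.sum_nbij' (i := fun k => k.primeFactors) (j := fun s => ∏ p ∈ s, p)
      ?_ ?_ ?_ ?_ ?_
    · intro k hk
      obtain ⟨hk1, hk2⟩ := Finset.mem_filter.mp hk
      have hkP : k ∣ P := (Nat.mem_divisors.mp hk1).1
      have hksq : Squarefree k := hPsq.squarefree_of_dvd hkP
      refine Finset.mem_filter.mpr ⟨Finset.mem_powerset.mpr
        (Nat.primeFactors_mono hkP hPne), ?_⟩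
      rwa [Nat.prod_primeFactors_of_squarefree hksq]
    · intro s hs
      obtain ⟨hs1, hs2⟩ := Finset.mem_filter.mp hs
      have hsQ := Finset.mem_powerset.mp hs1
      exact Finset.mem_filter.mpr ⟨Nat.mem_divisors.mpr ⟨hπP s hsQ, hPne⟩, hs2⟩
    · intro k hk
      obtain ⟨hk1, _⟩ := Finset.mem_filter.mp hk
      exact Nat.prod_primeFactors_of_squarefree
        (hPsq.squarefree_of_dvd (Nat.mem_divisors.mp hk1).1)
    · intro s hs
      exact Nat.primeFactors_prod (fun p hp => hQprime p (hDQ s hs hp))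
    · intro k hk
      obtain ⟨hk1, _⟩ := Finset.mem_filter.mp hk
      rfl
  have hinjπ : ∀ s t : Finset ℕ, s ⊆ Qs → t ⊆ Qs →
      (∏ p ∈ s, p) = (∏ p ∈ t, p) → s = t := by
    intro s t hs ht hst
    rw [← Nat.primeFactors_prod (fun p hp => hQprime p (hs hp)), hst,
      Nat.primeFactors_prod (fun p hp => hQprime p (ht hp))]
  set T := (Finset.Icc 1 ⌊ξ ^ 2⌋₊).sigma
    (fun d => d.divisors.sigma (fun e => e.divisors)) with hT
  have hRbound : R ≤ ∑ d ∈ Finset.Icc 1 ⌊ξ ^ 2⌋₊,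
      (∑ e ∈ d.divisors, (e.divisors.card : ℝ)) * C * (d : ℝ) ^ κ := by
    have hξ0 : (0:ℝ) ≤ ξ := le_trans zero_le_one hξ
    have b1 : R ≤ ∑ s ∈ D, ∑ t ∈ D, C * ((∏ p ∈ s ∪ t, p : ℕ) : ℝ) ^ κ := by
      rw [hR]
      refine Finset.sum_le_sum fun s hs => Finset.sum_le_sum fun t ht => ?_
      have hsub : s ∪ t ⊆ Qs := Finset.union_subset (hDQ s hs) (hDQ t ht)
      calc lam s * lam t * r (∏ p ∈ s ∪ t, p)
          ≤ |lam s * lam t * r (∏ p ∈ s ∪ t, p)| := le_abs_self _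
        _ = |lam s| * |lam t| * |r (∏ p ∈ s ∪ t, p)| := by rw [abs_mul, abs_mul]
        _ ≤ 1 * 1 * (C * ((∏ p ∈ s ∪ t, p : ℕ) : ℝ) ^ κ) := by
            refine mul_le_mul (mul_le_mul (habs s) (habs t) (abs_nonneg _) zero_le_one)
              (hrbound _ (hπP _ hsub)) (abs_nonneg _) (by norm_num)
        _ = C * ((∏ p ∈ s ∪ t, p : ℕ) : ℝ) ^ κ := by ring
    have b2 : (∑ s ∈ D, ∑ t ∈ D, C * ((∏ p ∈ s ∪ t, p : ℕ) : ℝ) ^ κ)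
        ≤ ∑ y ∈ T, C * ((y.1 : ℕ) : ℝ) ^ κ := by
      rw [← Finset.sum_product']
      have hinj : ∀ x ∈ D ×ˢ D, ∀ y ∈ D ×ˢ D,
          ((⟨∏ p ∈ x.1 ∪ x.2, p, ∏ p ∈ x.1, p, ∏ p ∈ x.1 ∩ x.2, p⟩ : Σ _ : ℕ, Σ _ : ℕ, ℕ)
            = (⟨∏ p ∈ y.1 ∪ y.2, p, ∏ p ∈ y.1, p, ∏ p ∈ y.1 ∩ y.2, p⟩ : Σ _ : ℕ, Σ _ : ℕ, ℕ))
            → x = y := by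
        intro x hx y hy hxy
        obtain ⟨hx1, hx2⟩ := Finset.mem_product.mp hx
        obtain ⟨hy1, hy2⟩ := Finset.mem_product.mp hy
        obtain ⟨h1, h2'⟩ := Sigma.mk.inj_iff.mp hxy
        obtain ⟨h3, h4'⟩ := Sigma.mk.inj_iff.mp (eq_of_heq h2')
        have h4 := eq_of_heq h4'
        have hu : x.1 ∪ x.2 = y.1 ∪ y.2 := hinjπ _ _
          (Finset.union_subset (hDQ _ hx1) (hDQ _ hx2))
          (Finset.union_subset (hDQ _ hy1) (hDQ _ hy2)) h1
        have he : x.1 = y.1 := hinjπ _ _ (hDQ _ hx1) (hDQ _ hy1) h3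
        have hi : x.1 ∩ x.2 = y.1 ∩ y.2 := hinjπ _ _
          ((Finset.inter_subset_left).trans (hDQ _ hx1))
          ((Finset.inter_subset_left).trans (hDQ _ hy1)) h4
        have hset : ∀ s t : Finset ℕ, (s ∩ t) ∪ ((s ∪ t) \ s) = t := by
          intro s t
          ext p
          simp only [Finset.mem_union, Finset.mem_inter, Finset.mem_sdiff]
          tauto
        have h5 : x.2 = y.2 := by
          rw [← hset x.1 x.2, hu, hi, he, hset]
        rw [Prod.ext_iff]
        exact ⟨he, h5⟩
      calc (∑ x ∈ D ×ˢ D, C * ((∏ p ∈ x.1 ∪ x.2, p : ℕ) : ℝ) ^ κ)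
          = ∑ y ∈ (D ×ˢ D).image (fun x : Finset ℕ × Finset ℕ =>
              (⟨∏ p ∈ x.1 ∪ x.2, p, ∏ p ∈ x.1, p, ∏ p ∈ x.1 ∩ x.2, p⟩
                : Σ _ : ℕ, Σ _ : ℕ, ℕ)), C * ((y.1 : ℕ) : ℝ) ^ κ :=
            (Finset.sum_image
              (f := fun y : (Σ _ : ℕ, Σ _ : ℕ, ℕ) => C * ((y.1 : ℕ) : ℝ) ^ κ) hinj).symm
        _ ≤ ∑ y ∈ T, C * ((y.1 : ℕ) : ℝ) ^ κ := by
            refine Finset.sum_le_sum_of_subset_of_nonneg ?_ fun y _ _ => by positivity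
            intro y hy
            obtain ⟨x, hx, rfl⟩ := Finset.mem_image.mp hy
            obtain ⟨hx1, hx2⟩ := Finset.mem_product.mp hx
            have hs2 : ((∏ p ∈ x.1, p : ℕ) : ℝ) ≤ ξ := (Finset.mem_filter.mp hx1).2
            have ht2 : ((∏ p ∈ x.2, p : ℕ) : ℝ) ≤ ξ := (Finset.mem_filter.mp hx2).2
            have hupos : 0 < ∏ p ∈ x.1 ∪ x.2, p :=
              hπpos _ (Finset.union_subset (hDQ _ hx1) (hDQ _ hx2))
            have hdvd1 : (∏ p ∈ x.1 ∪ x.2, p) ∣ (∏ p ∈ x.1, p) * (∏ p ∈ x.2, p) :=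
              ⟨∏ p ∈ x.1 ∩ x.2, p, Finset.prod_union_inter.symm⟩
            have hle : ((∏ p ∈ x.1 ∪ x.2, p : ℕ) : ℝ) ≤ ξ ^ 2 := by
              have h6 : (∏ p ∈ x.1 ∪ x.2, p) ≤ (∏ p ∈ x.1, p) * (∏ p ∈ x.2, p) :=
                Nat.le_of_dvd (Nat.mul_pos (hπpos _ (hDQ _ hx1)) (hπpos _ (hDQ _ hx2)))
                  hdvd1
              calc ((∏ p ∈ x.1 ∪ x.2, p : ℕ) : ℝ)
                  ≤ ((∏ p ∈ x.1, p : ℕ) : ℝ) * ((∏ p ∈ x.2, p : ℕ) : ℝ) := by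
                    exact_mod_cast Nat.cast_le.mpr h6
                _ ≤ ξ * ξ := mul_le_mul hs2 ht2 (Nat.cast_nonneg _) hξ0
                _ = ξ ^ 2 := (sq ξ).symm
            rw [hT]
            refine Finset.mem_sigma.mpr ⟨?_, ?_⟩
            · exact Finset.mem_Icc.mpr ⟨hupos, Nat.le_floor hle⟩
            · refine Finset.mem_sigma.mpr ⟨?_, ?_⟩
              · exact Nat.mem_divisors.mpr
                  ⟨Finset.prod_dvd_prod_of_subset _ _ _ Finset.subset_union_left,
                    hupos.ne'⟩
              · exact Nat.mem_divisors.mpr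
                  ⟨Finset.prod_dvd_prod_of_subset _ _ _ Finset.inter_subset_left,
                    (hπpos _ (hDQ _ hx1)).ne'⟩
    have b3 : (∑ y ∈ T, C * ((y.1 : ℕ) : ℝ) ^ κ)
        = ∑ d ∈ Finset.Icc 1 ⌊ξ ^ 2⌋₊,
            (∑ e ∈ d.divisors, (e.divisors.card : ℝ)) * C * (d : ℝ) ^ κ := by
      rw [hT, Finset.sum_sigma]
      refine Finset.sum_congr rfl fun d _ => ?_
      rw [Finset.sum_sigma]
      dsimp only
      rw [Finset.sum_mul, Finset.sum_mul]
      refine Finset.sum_congr rfl fun e _ => ?_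
      rw [Finset.sum_const, nsmul_eq_mul]
      ring
    exact b1.trans (b2.trans b3.le)
  calc (∑ n ∈ Finset.Icc 1 N, if Nat.Coprime n P then a n else 0)
      ≤ ∑ n ∈ Finset.Icc 1 N,
          a n * (∑ s ∈ D, if (∏ p ∈ s, p) ∣ n then lam s else 0)^2 := step1
    _ = X * (∑ s ∈ D, ∑ t ∈ D, lam s * lam t * ∏ p ∈ s ∪ t, g p) + R := step2
    _ = X / (∑ k ∈ P.divisors.filter (fun k : ℕ => (k : ℝ) ≤ ξ),
          ∏ q ∈ k.primeFactors, g q / (1 - g q)) + R := by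
        rw [hQF, div_eq_mul_inv, hGmatch]
    _ ≤ X / (∑ k ∈ P.divisors.filter (fun k : ℕ => (k : ℝ) ≤ ξ),
          ∏ q ∈ k.primeFactors, g q / (1 - g q))
        + ∑ d ∈ Finset.Icc 1 ⌊ξ ^ 2⌋₊,
            (∑ e ∈ d.divisors, (e.divisors.card : ℝ)) * C * (d : ℝ) ^ κ :=
        add_le_add le_rfl hRbound
end
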